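/- Main Theorem (Yekutieli): If F : G → H is a weak equivalence between cosimplicial crossed groupoids, then the induced function Desc-bar(F) : Desc-bar(G) → Desc-bar(H) on gauge equivalence classes of combinatorial descent data is bijective. -/

import Mathlib

/-! Crossed groupoids (= crossed modules over groupoids), following Yekutieli,
"Combinatorial descent data for gerbes". -/

structure CrossedGroupoid : Type 1 where
  Obj : Type
  Hom : Obj → Obj → Type
  id : ∀ x, Hom x x
  comp : ∀ {x y z}, Hom y z → Hom x y → Hom x z
  inv : ∀ {x y}, Hom x y → Hom y x
  comp_assoc : ∀ {x y z w} (h : Hom z w) (g : Hom y z) (f : Hom x y),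
    comp (comp h g) f = comp h (comp g f)
  id_comp : ∀ {x y} (f : Hom x y), comp (id y) f = f
  comp_id : ∀ {x y} (f : Hom x y), comp f (id x) = f
  inv_comp : ∀ {x y} (f : Hom x y), comp (inv f) f = id x
  comp_inv : ∀ {x y} (f : Hom x y), comp f (inv f) = id y
  -- the totally disconnected groupoid 𝒢₂, i.e. a family of groups
  G2 : Obj → Type
  mul : ∀ {x}, G2 x → G2 x → G2 x
  one : ∀ x, G2 x
  inv2 : ∀ {x}, G2 x → G2 x
  mul_assoc : ∀ {x} (a b c : G2 x), mul (mul a b) c = mul a (mul b c)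
  one_mul : ∀ {x} (a : G2 x), mul (one x) a = a
  mul_one : ∀ {x} (a : G2 x), mul a (one x) = a
  inv2_mul : ∀ {x} (a : G2 x), mul (inv2 a) a = one x
  -- the twisting: an action of 𝒢₁ on 𝒢₂
  Ad : ∀ {x y}, Hom x y → G2 x → G2 y
  Ad_mul : ∀ {x y} (g : Hom x y) (a b : G2 x), Ad g (mul a b) = mul (Ad g a) (Ad g b)
  Ad_one : ∀ {x y} (g : Hom x y), Ad g (one x) = one y
  Ad_id : ∀ {x} (a : G2 x), Ad (id x) a = a
  Ad_comp : ∀ {x y z} (h : Hom y z) (g : Hom x y) (a : G2 x),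
    Ad (comp h g) a = Ad h (Ad g a)
  -- the feedback D : 𝒢₂ → 𝒢₁, identity on objects
  D : ∀ {x}, G2 x → Hom x x
  D_mul : ∀ {x} (a b : G2 x), D (mul a b) = comp (D a) (D b)
  D_one : ∀ x, D (one x) = id x
  -- equivariance of the feedback
  D_Ad : ∀ {x y} (g : Hom x y) (a : G2 x), D (Ad g a) = comp (comp g (D a)) (inv g)
  -- Peiffer condition
  peiffer : ∀ {x} (a b : G2 x), Ad (D a) b = mul (mul a b) (inv2 a)

namespace CrossedGroupoid

/-- Transport of 1-morphisms along equalities of objects. -/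
def hcast (G : CrossedGroupoid) {x x' y y' : G.Obj} (ex : x = x') (ey : y = y')
    (f : G.Hom x y) : G.Hom x' y' := ey ▸ ex ▸ f

/-- Transport of 2-morphisms along an equality of objects. -/
def cast2 (G : CrossedGroupoid) {x x' : G.Obj} (e : x = x') (a : G.G2 x) : G.G2 x' := e ▸ a

/-- The relation "isomorphic in 𝒢₁". -/
def pi0Rel (G : CrossedGroupoid) : G.Obj → G.Obj → Prop := fun x y => Nonempty (G.Hom x y)

/-- π₀ of a crossed groupoid: isomorphism classes of objects of 𝒢₁. -/
def pi0 (G : CrossedGroupoid) : Type := Quot G.pi0Rel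

/-- The right action relation on a hom-set: g' = g ∘ D(a). -/
def homRel (G : CrossedGroupoid) (x x' : G.Obj) : G.Hom x x' → G.Hom x x' → Prop :=
  fun g g' => ∃ a : G.G2 x, g' = G.comp g (G.D a)

/-- π₁(G, x, x') := 𝒢₁(x,x') / 𝒢₂(x). -/
def pi1' (G : CrossedGroupoid) (x x' : G.Obj) : Type := Quot (G.homRel x x')

/-- π₁(G, x) = Coker(D : 𝒢₂(x) → 𝒢₁(x)) as a quotient set. -/
def pi1 (G : CrossedGroupoid) (x : G.Obj) : Type := G.pi1' x x

/-- π₂(G, x) = Ker(D : 𝒢₂(x) → 𝒢₁(x)). -/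
def pi2 (G : CrossedGroupoid) (x : G.Obj) : Type := {a : G.G2 x // G.D a = G.id x}

end CrossedGroupoid

/-- A morphism of crossed groupoids. -/
structure CrossedGroupoidHom (G H : CrossedGroupoid) where
  obj : G.Obj → H.Obj
  map1 : ∀ {x y : G.Obj}, G.Hom x y → H.Hom (obj x) (obj y)
  map2 : ∀ {x : G.Obj}, G.G2 x → H.G2 (obj x)
  map1_comp : ∀ {x y z : G.Obj} (g : G.Hom y z) (f : G.Hom x y),
    map1 (G.comp g f) = H.comp (map1 g) (map1 f)
  map1_id : ∀ x : G.Obj, map1 (G.id x) = H.id (obj x)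
  map2_mul : ∀ {x : G.Obj} (a b : G.G2 x), map2 (G.mul a b) = H.mul (map2 a) (map2 b)
  map_D : ∀ {x : G.Obj} (a : G.G2 x), map1 (G.D a) = H.D (map2 a)
  map_Ad : ∀ {x y : G.Obj} (g : G.Hom x y) (a : G.G2 x),
    map2 (G.Ad g a) = H.Ad (map1 g) (map2 a)

namespace CrossedGroupoidHom

/-- Identity morphism of crossed groupoids. -/
def id (G : CrossedGroupoid) : CrossedGroupoidHom G G where
  obj := fun x => x
  map1 := fun f => f
  map2 := fun a => a
  map1_comp := fun _ _ => rfl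
  map1_id := fun _ => rfl
  map2_mul := fun _ _ => rfl
  map_D := fun _ => rfl
  map_Ad := fun _ _ => rfl

/-- Composition of morphisms of crossed groupoids. -/
def comp {G H K : CrossedGroupoid} (F₂ : CrossedGroupoidHom H K) (F₁ : CrossedGroupoidHom G H) :
    CrossedGroupoidHom G K where
  obj := fun x => F₂.obj (F₁.obj x)
  map1 := fun f => F₂.map1 (F₁.map1 f)
  map2 := fun a => F₂.map2 (F₁.map2 a)
  map1_comp := fun g f => by (try dsimp only); rw [F₁.map1_comp, F₂.map1_comp]
  map1_id := fun x => by (try dsimp only); rw [F₁.map1_id, F₂.map1_id]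
  map2_mul := fun a b => by (try dsimp only); rw [F₁.map2_mul, F₂.map2_mul]
  map_D := fun a => by (try dsimp only); rw [F₁.map_D, F₂.map_D]
  map_Ad := fun g a => by (try dsimp only); rw [F₁.map_Ad, F₂.map_Ad]

variable {G H : CrossedGroupoid}

/-- The induced map on π₀. -/
def pi0map (F : CrossedGroupoidHom G H) : G.pi0 → H.pi0 :=
  Quot.map F.obj (fun _ _ h => ⟨F.map1 h.some⟩)

/-- The induced map on π₁(−, x, x'). -/
def pi1'map (F : CrossedGroupoidHom G H) (x x' : G.Obj) :
    G.pi1' x x' → H.pi1' (F.obj x) (F.obj x') :=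
  Quot.map F.map1 (by
    rintro g g' ⟨a, rfl⟩
    exact ⟨F.map2 a, by rw [F.map1_comp, F.map_D]⟩)

/-- The induced map on π₁(−, x). -/
def pi1map (F : CrossedGroupoidHom G H) (x : G.Obj) : G.pi1 x → H.pi1 (F.obj x) :=
  F.pi1'map x x

/-- The induced map on π₂(−, x). -/
def pi2map (F : CrossedGroupoidHom G H) (x : G.Obj) : G.pi2 x → H.pi2 (F.obj x) :=
  fun a => ⟨F.map2 a.1, by rw [← F.map_D, a.2, F.map1_id]⟩

/-- A weak equivalence of crossed groupoids: bijective on π₀, π₁ and π₂. -/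
def IsWeakEquiv (F : CrossedGroupoidHom G H) : Prop :=
  Function.Bijective F.pi0map ∧ (∀ x, Function.Bijective (F.pi1map x)) ∧
    (∀ x, Function.Bijective (F.pi2map x))

end CrossedGroupoidHom

/-! ### Combinatorics of the simplex category -/

/-- The vertex (i) of Δ^q, as a monotone map Δ⁰ → Δ^q. -/
def vtxMap {q : ℕ} (i : Fin (q + 1)) : Fin 1 →o Fin (q + 1) :=
  ⟨fun _ => i, fun _ _ _ => le_rfl⟩

/-- The edge (i,j) of Δ^q, as a monotone map Δ¹ → Δ^q. -/
def edgeMap {q : ℕ} (i j : Fin (q + 1)) (h : i ≤ j) : Fin 2 →o Fin (q + 1) :=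
  ⟨fun k => if (k : ℕ) = 0 then i else j, by
    intro a b hab
    have hab' : (a : ℕ) ≤ (b : ℕ) := hab
    show (if (a : ℕ) = 0 then i else j) ≤ (if (b : ℕ) = 0 then i else j)
    by_cases ha : (a : ℕ) = 0
    · by_cases hb : (b : ℕ) = 0
      · rw [if_pos ha, if_pos hb]
      · rw [if_pos ha, if_neg hb]; exact h
    · have hb : ¬ (b : ℕ) = 0 := fun hb0 => ha (Nat.le_zero.mp (hb0 ▸ hab'))
      rw [if_neg ha, if_neg hb]⟩

/-- The triangle (i,j,k) of Δ^q, as a monotone map Δ² → Δ^q. -/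
def triMap {q : ℕ} (i j k : Fin (q + 1)) (hij : i ≤ j) (hjk : j ≤ k) :
    Fin 3 →o Fin (q + 1) :=
  ⟨fun m => if (m : ℕ) = 0 then i else if (m : ℕ) = 1 then j else k, by
    intro a b hab
    have hab' : (a : ℕ) ≤ (b : ℕ) := hab
    show (if (a : ℕ) = 0 then i else if (a : ℕ) = 1 then j else k) ≤
      (if (b : ℕ) = 0 then i else if (b : ℕ) = 1 then j else k)
    by_cases ha0 : (a : ℕ) = 0
    · by_cases hb0 : (b : ℕ) = 0
      · rw [if_pos ha0, if_pos hb0]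
      · by_cases hb1 : (b : ℕ) = 1
        · rw [if_pos ha0, if_neg hb0, if_pos hb1]; exact hij
        · rw [if_pos ha0, if_neg hb0, if_neg hb1]; exact hij.trans hjk
    · by_cases ha1 : (a : ℕ) = 1
      · have hb0 : ¬ (b : ℕ) = 0 := by omega
        by_cases hb1 : (b : ℕ) = 1
        · rw [if_neg ha0, if_pos ha1, if_neg hb0, if_pos hb1]
        · rw [if_neg ha0, if_pos ha1, if_neg hb0, if_neg hb1]; exact hjk
      · have hb0 : ¬ (b : ℕ) = 0 := by omega
        have hb1 : ¬ (b : ℕ) = 1 := by omega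
        rw [if_neg ha0, if_neg ha1, if_neg hb0, if_neg hb1]⟩

theorem comp_vtxMap {p q : ℕ} (α : Fin (p + 1) →o Fin (q + 1)) (i : Fin (p + 1)) :
    α.comp (vtxMap i) = vtxMap (α i) := rfl

/-! ### Cosimplicial crossed groupoids -/

/-- A cosimplicial crossed groupoid: a functor Δ → CrGrpd. -/
structure CosimplicialCrossedGroupoid : Type 1 where
  obj : ℕ → CrossedGroupoid
  map : ∀ {p q : ℕ}, (Fin (p + 1) →o Fin (q + 1)) → CrossedGroupoidHom (obj p) (obj q)
  map_id : ∀ p, map (OrderHom.id : Fin (p + 1) →o Fin (p + 1)) = CrossedGroupoidHom.id (obj p)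
  map_comp : ∀ {p q r : ℕ} (β : Fin (q + 1) →o Fin (r + 1)) (α : Fin (p + 1) →o Fin (q + 1)),
    map (β.comp α) = (map β).comp (map α)

namespace CosimplicialCrossedGroupoid

variable (G : CosimplicialCrossedGroupoid)

theorem obj_comp {p q r : ℕ} (β : Fin (q + 1) →o Fin (r + 1)) (α : Fin (p + 1) →o Fin (q + 1))
    (x : (G.obj p).Obj) :
    (G.map β).obj ((G.map α).obj x) = (G.map (β.comp α)).obj x := by
  rw [G.map_comp]; rfl

/-- The object x of G⁰ pushed to the vertex (i) of Δ^q. -/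
def X (x : (G.obj 0).Obj) (q : ℕ) (i : Fin (q + 1)) : (G.obj q).Obj :=
  (G.map (vtxMap i)).obj x

theorem X_push (x : (G.obj 0).Obj) {p q : ℕ} (α : Fin (p + 1) →o Fin (q + 1))
    (i : Fin (p + 1)) : (G.map α).obj (G.X x p i) = G.X x q (α i) := by
  unfold X
  rw [obj_comp, comp_vtxMap]

/-- Pushing a 1-morphism between vertex objects along α. -/
def push1 {x : (G.obj 0).Obj} {p q : ℕ} (α : Fin (p + 1) →o Fin (q + 1))
    {i j : Fin (p + 1)} (g : (G.obj p).Hom (G.X x p i) (G.X x p j)) :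
    (G.obj q).Hom (G.X x q (α i)) (G.X x q (α j)) :=
  (G.obj q).hcast (G.X_push x α i) (G.X_push x α j) ((G.map α).map1 g)

/-- Pushing a 2-morphism at a vertex object along α. -/
def push2 {x : (G.obj 0).Obj} {p q : ℕ} (α : Fin (p + 1) →o Fin (q + 1))
    {i : Fin (p + 1)} (a : (G.obj p).G2 (G.X x p i)) :
    (G.obj q).G2 (G.X x q (α i)) :=
  (G.obj q).cast2 (G.X_push x α i) ((G.map α).map2 a)

/-- Yekutieli's combinatorial descent conditions (Definition 1.5):
the failure-of-1-cocycle condition and the twisted 2-cocycle condition. -/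
def IsDescent (x : (G.obj 0).Obj)
    (g : (G.obj 1).Hom (G.X x 1 0) (G.X x 1 1))
    (a : (G.obj 2).G2 (G.X x 2 0)) : Prop :=
  ((G.obj 2).comp ((G.obj 2).comp ((G.obj 2).inv (G.push1 (edgeMap 0 2 (by decide)) g))
      (G.push1 (edgeMap 1 2 (by decide)) g)) (G.push1 (edgeMap 0 1 (by decide)) g)
    = (G.obj 2).D a)
  ∧
  ((G.obj 3).mul ((G.obj 3).mul
        ((G.obj 3).inv2 (G.push2 (triMap 0 1 3 (by decide) (by decide)) a))
        (G.push2 (triMap 0 2 3 (by decide) (by decide)) a))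
      (G.push2 (triMap 0 1 2 (by decide) (by decide)) a)
    = (G.obj 3).Ad ((G.obj 3).inv (G.push1 (edgeMap 0 1 (by decide)) g))
        (G.push2 (triMap 1 2 3 (by decide) (by decide)) a))

/-- A combinatorial descent datum (Definition 1.5). -/
structure Desc (G : CosimplicialCrossedGroupoid) where
  x : (G.obj 0).Obj
  g : (G.obj 1).Hom (G.X x 1 0) (G.X x 1 1)
  a : (G.obj 2).G2 (G.X x 2 0)
  isDescent : G.IsDescent x g a

/-- The Yekutieli gauge-transformation conditions (Definition 1.7) for a pair (f, c). -/
def IsGauge (x : (G.obj 0).Obj) (g : (G.obj 1).Hom (G.X x 1 0) (G.X x 1 1))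
    (a : (G.obj 2).G2 (G.X x 2 0))
    (x' : (G.obj 0).Obj) (g' : (G.obj 1).Hom (G.X x' 1 0) (G.X x' 1 1))
    (a' : (G.obj 2).G2 (G.X x' 2 0))
    (f : (G.obj 0).Hom x x') (c : (G.obj 1).G2 (G.X x 1 0)) : Prop :=
  (g' = (G.obj 1).comp ((G.obj 1).comp ((G.obj 1).comp
      ((G.map (vtxMap (1 : Fin 2))).map1 f) g) ((G.obj 1).D c))
      ((G.obj 1).inv ((G.map (vtxMap (0 : Fin 2))).map1 f)))
  ∧
  (a' = (G.obj 2).Ad ((G.map (vtxMap (0 : Fin 3))).map1 f)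
    ((G.obj 2).mul ((G.obj 2).mul ((G.obj 2).mul
        ((G.obj 2).inv2 (G.push2 (edgeMap 0 2 (by decide)) c)) a)
        ((G.obj 2).Ad ((G.obj 2).inv (G.push1 (edgeMap 0 1 (by decide)) g))
          (G.push2 (edgeMap 1 2 (by decide)) c)))
      (G.push2 (edgeMap 0 1 (by decide)) c)))

/-- Gauge equivalence of descent data. -/
def GaugeEquiv (P Q : G.Desc) : Prop :=
  ∃ (f : (G.obj 0).Hom P.x Q.x) (c : (G.obj 1).G2 (G.X P.x 1 0)),
    G.IsGauge P.x P.g P.a Q.x Q.g Q.a f c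

/-- The explicit formula for the transported 2-morphism a'
(Definition 1.7(ii) / Lemma 1.9). -/
def transportA {x x' : (G.obj 0).Obj} (f : (G.obj 0).Hom x x')
    (g : (G.obj 1).Hom (G.X x 1 0) (G.X x 1 1))
    (a : (G.obj 2).G2 (G.X x 2 0)) (c : (G.obj 1).G2 (G.X x 1 0)) :
    (G.obj 2).G2 (G.X x' 2 0) :=
  (G.obj 2).Ad ((G.map (vtxMap (0 : Fin 3))).map1 f)
    ((G.obj 2).mul ((G.obj 2).mul ((G.obj 2).mul
        ((G.obj 2).inv2 (G.push2 (edgeMap 0 2 (by decide)) c)) a)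
        ((G.obj 2).Ad ((G.obj 2).inv (G.push1 (edgeMap 0 1 (by decide)) g))
          (G.push2 (edgeMap 1 2 (by decide)) c)))
      (G.push2 (edgeMap 0 1 (by decide)) c))

end CosimplicialCrossedGroupoid

/-- A morphism of cosimplicial crossed groupoids. -/
structure CosimplicialMor (G H : CosimplicialCrossedGroupoid) where
  app : ∀ p, CrossedGroupoidHom (G.obj p) (H.obj p)
  naturality : ∀ {p q : ℕ} (α : Fin (p + 1) →o Fin (q + 1)),
    (app q).comp (G.map α) = (H.map α).comp (app p)

namespace CosimplicialMor

variable {G H : CosimplicialCrossedGroupoid}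

theorem app_X (F : CosimplicialMor G H) (x : (G.obj 0).Obj) (q : ℕ) (i : Fin (q + 1)) :
    (F.app q).obj (G.X x q i) = H.X ((F.app 0).obj x) q i :=
  congrFun (congrArg CrossedGroupoidHom.obj (F.naturality (vtxMap i))) x

/-- Image of an object of G⁰. -/
def objD (F : CosimplicialMor G H) (x : (G.obj 0).Obj) : (H.obj 0).Obj := (F.app 0).obj x

/-- Image of a 1-morphism in dimension 0. -/
def mapF (F : CosimplicialMor G H) {x x' : (G.obj 0).Obj} (f : (G.obj 0).Hom x x') :
    (H.obj 0).Hom (F.objD x) (F.objD x') := (F.app 0).map1 f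

/-- Image of the 1-morphism part of a descent datum. -/
def mapG (F : CosimplicialMor G H) {x : (G.obj 0).Obj}
    (g : (G.obj 1).Hom (G.X x 1 0) (G.X x 1 1)) :
    (H.obj 1).Hom (H.X (F.objD x) 1 0) (H.X (F.objD x) 1 1) :=
  (H.obj 1).hcast (F.app_X x 1 0) (F.app_X x 1 1) ((F.app 1).map1 g)

/-- Image of the 2-morphism part of a descent datum. -/
def mapA (F : CosimplicialMor G H) {x : (G.obj 0).Obj} (a : (G.obj 2).G2 (G.X x 2 0)) :
    (H.obj 2).G2 (H.X (F.objD x) 2 0) :=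
  (H.obj 2).cast2 (F.app_X x 2 0) ((F.app 2).map2 a)

/-- Image of the 2-morphism part of a gauge transformation. -/
def mapC (F : CosimplicialMor G H) {x : (G.obj 0).Obj} (c : (G.obj 1).G2 (G.X x 1 0)) :
    (H.obj 1).G2 (H.X (F.objD x) 1 0) :=
  (H.obj 1).cast2 (F.app_X x 1 0) ((F.app 1).map2 c)

/-- A weak equivalence of cosimplicial crossed groupoids. -/
def IsWeakEquiv (F : CosimplicialMor G H) : Prop := ∀ p, (F.app p).IsWeakEquiv

end CosimplicialMor

/-! ### Basic algebra kit for crossed groupoids -/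
namespace CrossedGroupoid

variable (K : CrossedGroupoid)

attribute [simp] CrossedGroupoid.comp_assoc CrossedGroupoid.id_comp CrossedGroupoid.comp_id
  CrossedGroupoid.inv_comp CrossedGroupoid.comp_inv CrossedGroupoid.mul_assoc
  CrossedGroupoid.one_mul CrossedGroupoid.mul_one CrossedGroupoid.inv2_mul
  CrossedGroupoid.Ad_mul CrossedGroupoid.Ad_one CrossedGroupoid.Ad_id
  CrossedGroupoid.D_mul CrossedGroupoid.D_one

@[simp] theorem inv_comp_cancel {x y z : K.Obj} (f : K.Hom x y) (g : K.Hom z x) :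
    K.comp (K.inv f) (K.comp f g) = g := by
  rw [← K.comp_assoc, K.inv_comp, K.id_comp]

@[simp] theorem comp_inv_cancel {x y z : K.Obj} (f : K.Hom x y) (g : K.Hom z y) :
    K.comp f (K.comp (K.inv f) g) = g := by
  rw [← K.comp_assoc, K.comp_inv, K.id_comp]

@[simp] theorem mul_inv2 {x : K.Obj} (a : K.G2 x) : K.mul a (K.inv2 a) = K.one x := by
  have h1 : K.mul (K.inv2 (K.inv2 a)) (K.inv2 a) = K.one x := K.inv2_mul _
  calc K.mul a (K.inv2 a)
      = K.mul (K.mul (K.inv2 (K.inv2 a)) (K.inv2 a)) (K.mul a (K.inv2 a)) := by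
        rw [h1, K.one_mul]
    _ = K.mul (K.inv2 (K.inv2 a)) (K.mul (K.mul (K.inv2 a) a) (K.inv2 a)) := by
        rw [K.mul_assoc, ← K.mul_assoc (K.inv2 a) a (K.inv2 a)]
    _ = K.one x := by rw [K.inv2_mul, K.one_mul, h1]

@[simp] theorem inv2_mul_cancel {x : K.Obj} (a b : K.G2 x) :
    K.mul (K.inv2 a) (K.mul a b) = b := by rw [← K.mul_assoc, K.inv2_mul, K.one_mul]

@[simp] theorem mul_inv2_cancel {x : K.Obj} (a b : K.G2 x) :
    K.mul a (K.mul (K.inv2 a) b) = b := by rw [← K.mul_assoc, K.mul_inv2, K.one_mul]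

theorem mul_left_cancel {x : K.Obj} {a b c : K.G2 x} (h : K.mul a b = K.mul a c) : b = c := by
  have := congrArg (K.mul (K.inv2 a)) h
  rwa [K.inv2_mul_cancel, K.inv2_mul_cancel] at this

@[simp] theorem inv2_one (x : K.Obj) : K.inv2 (K.one x) = K.one x := by
  have := K.inv2_mul (K.one x); rwa [K.mul_one] at this

@[simp] theorem inv2_inv2 {x : K.Obj} (a : K.G2 x) : K.inv2 (K.inv2 a) = a :=
  K.mul_left_cancel (by rw [K.mul_inv2, K.inv2_mul])

@[simp] theorem inv2_mul' {x : K.Obj} (a b : K.G2 x) :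
    K.inv2 (K.mul a b) = K.mul (K.inv2 b) (K.inv2 a) :=
  K.mul_left_cancel (x := x) (a := K.mul a b) (by
    rw [K.mul_inv2, K.mul_assoc, K.mul_inv2_cancel, K.mul_inv2])

@[simp] theorem inv_inv {x y : K.Obj} (f : K.Hom x y) : K.inv (K.inv f) = f :=
  calc K.inv (K.inv f) = K.comp (K.inv (K.inv f)) (K.comp (K.inv f) f) := by
        rw [K.inv_comp, K.comp_id]
    _ = f := K.inv_comp_cancel (K.inv f) f

@[simp] theorem inv_id (x : K.Obj) : K.inv (K.id x) = K.id x := by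
  have := K.comp_inv (K.id x); rwa [K.id_comp] at this

@[simp] theorem inv_comp' {x y z : K.Obj} (g : K.Hom y z) (f : K.Hom x y) :
    K.inv (K.comp g f) = K.comp (K.inv f) (K.inv g) := by
  have h : K.comp (K.inv (K.comp g f)) (K.comp (K.comp g f) (K.comp (K.inv f) (K.inv g))) =
      K.comp (K.inv f) (K.inv g) := K.inv_comp_cancel _ _
  rwa [K.comp_assoc, K.comp_inv_cancel f (K.inv g), K.comp_inv, K.comp_id] at h

@[simp] theorem Ad_inv2 {x y : K.Obj} (g : K.Hom x y) (a : K.G2 x) :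
    K.Ad g (K.inv2 a) = K.inv2 (K.Ad g a) :=
  K.mul_left_cancel (x := y) (a := K.Ad g a) (by rw [← K.Ad_mul, K.mul_inv2, K.Ad_one, K.mul_inv2])

@[simp] theorem D_inv2 {x : K.Obj} (a : K.G2 x) : K.D (K.inv2 a) = K.inv (K.D a) := by
  have h : K.comp (K.inv (K.D a)) (K.comp (K.D a) (K.D (K.inv2 a))) = K.D (K.inv2 a) :=
    K.inv_comp_cancel _ _
  rw [← K.D_mul, K.mul_inv2, K.D_one, K.comp_id] at h
  exact h.symm

theorem Ad_inv_apply {x y : K.Obj} (g : K.Hom x y) (a : K.G2 y) (b : K.G2 x) :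
    K.Ad (K.inv g) a = b ↔ a = K.Ad g b := by
  constructor
  · rintro rfl; rw [← K.Ad_comp, K.comp_inv, K.Ad_id]
  · rintro rfl; rw [← K.Ad_comp, K.inv_comp, K.Ad_id]

/-- Peiffer-style commutation: move an element past `b` at the cost of `Ad (D b)⁻¹`. -/
theorem mul_comm_D {x : K.Obj} (b u : K.G2 x) :
    K.mul u b = K.mul b (K.Ad (K.inv (K.D b)) u) := by
  have h := K.peiffer (K.inv2 b) u
  rw [K.D_inv2] at h
  rw [h, K.inv2_inv2, ← K.mul_assoc, ← K.mul_assoc, K.mul_inv2, K.one_mul]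

/-! ### Cast kit -/

@[simp] theorem hcast_rfl {x y : K.Obj} (f : K.Hom x y) : K.hcast rfl rfl f = f := rfl

@[simp] theorem cast2_rfl {x : K.Obj} (a : K.G2 x) : K.cast2 rfl a = a := rfl

theorem hcast_hcast {x x' x'' y y' y'' : K.Obj} (ex : x = x') (ey : y = y')
    (ex' : x' = x'') (ey' : y' = y'') (f : K.Hom x y) :
    K.hcast ex' ey' (K.hcast ex ey f) = K.hcast (ex.trans ex') (ey.trans ey') f := by
  cases ex; cases ey; cases ex'; cases ey'; rfl

theorem cast2_cast2 {x x' x'' : K.Obj} (e : x = x') (e' : x' = x'') (a : K.G2 x) :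
    K.cast2 e' (K.cast2 e a) = K.cast2 (e.trans e') a := by cases e; cases e'; rfl

theorem hcast_irrel {x x' y y' : K.Obj} (ex ex' : x = x') (ey ey' : y = y') (f : K.Hom x y) :
    K.hcast ex ey f = K.hcast ex' ey' f := rfl

theorem hcast_comp {x y z x' y' z' : K.Obj} (ex : x = x') (ey : y = y') (ez : z = z')
    (g : K.Hom y z) (f : K.Hom x y) :
    K.hcast ex ez (K.comp g f) = K.comp (K.hcast ey ez g) (K.hcast ex ey f) := by
  cases ex; cases ey; cases ez; rfl

theorem hcast_inv {x y x' y' : K.Obj} (ex : x = x') (ey : y = y') (f : K.Hom x y) :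
    K.hcast ey ex (K.inv f) = K.inv (K.hcast ex ey f) := by cases ex; cases ey; rfl

theorem hcast_id {x x' : K.Obj} (e : x = x') : K.hcast e e (K.id x) = K.id x' := by
  cases e; rfl

theorem cast2_mul {x x' : K.Obj} (e : x = x') (a b : K.G2 x) :
    K.cast2 e (K.mul a b) = K.mul (K.cast2 e a) (K.cast2 e b) := by cases e; rfl

theorem cast2_inv2 {x x' : K.Obj} (e : x = x') (a : K.G2 x) :
    K.cast2 e (K.inv2 a) = K.inv2 (K.cast2 e a) := by cases e; rfl

theorem cast2_one {x x' : K.Obj} (e : x = x') : K.cast2 e (K.one x) = K.one x' := by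
  cases e; rfl

theorem D_cast2 {x x' : K.Obj} (e : x = x') (a : K.G2 x) :
    K.D (K.cast2 e a) = K.hcast e e (K.D a) := by cases e; rfl

theorem Ad_hcast {x y x' y' : K.Obj} (ex : x = x') (ey : y = y') (g : K.Hom x y) (a : K.G2 x) :
    K.Ad (K.hcast ex ey g) (K.cast2 ex a) = K.cast2 ey (K.Ad g a) := by cases ex; cases ey; rfl

theorem cast2_eq_iff {x x' : K.Obj} (e : x = x') (a : K.G2 x) (b : K.G2 x') :
    K.cast2 e a = b ↔ a = K.cast2 e.symm b := by cases e; simp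

theorem hcast_eq_iff {x x' y y' : K.Obj} (ex : x = x') (ey : y = y')
    (f : K.Hom x y) (g : K.Hom x' y') :
    K.hcast ex ey f = g ↔ f = K.hcast ex.symm ey.symm g := by cases ex; cases ey; simp

end CrossedGroupoid

namespace CrossedGroupoidHom

variable {K L : CrossedGroupoid} (Φ : CrossedGroupoidHom K L)

theorem map1_hcast {x x' y y' : K.Obj} (ex : x = x') (ey : y = y') (f : K.Hom x y) :
    Φ.map1 (K.hcast ex ey f) =
      L.hcast (congrArg Φ.obj ex) (congrArg Φ.obj ey) (Φ.map1 f) := by cases ex; cases ey; rfl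

theorem map2_cast2 {x x' : K.Obj} (e : x = x') (a : K.G2 x) :
    Φ.map2 (K.cast2 e a) = L.cast2 (congrArg Φ.obj e) (Φ.map2 a) := by cases e; rfl

@[simp] theorem map1_inv {x y : K.Obj} (f : K.Hom x y) : Φ.map1 (K.inv f) = L.inv (Φ.map1 f) := by
  have h : L.comp (L.inv (Φ.map1 f)) (L.comp (Φ.map1 f) (Φ.map1 (K.inv f))) =
      Φ.map1 (K.inv f) := L.inv_comp_cancel _ _
  rw [← Φ.map1_comp, K.comp_inv, Φ.map1_id, L.comp_id] at h
  exact h.symm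

@[simp] theorem map2_one (x : K.Obj) : Φ.map2 (K.one x) = L.one (Φ.obj x) :=
  L.mul_left_cancel (x := Φ.obj x) (a := Φ.map2 (K.one x)) (by
    rw [← Φ.map2_mul, K.one_mul, L.mul_one])

@[simp] theorem map2_inv2 {x : K.Obj} (a : K.G2 x) : Φ.map2 (K.inv2 a) = L.inv2 (Φ.map2 a) :=
  L.mul_left_cancel (x := Φ.obj x) (a := Φ.map2 a) (by
    rw [← Φ.map2_mul, K.mul_inv2, Φ.map2_one, L.mul_inv2])

/-- Extract componentwise equalities from an equality of crossed groupoid morphisms. -/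
theorem obj_congr {Φ Ψ : CrossedGroupoidHom K L} (h : Φ = Ψ) (x : K.Obj) : Φ.obj x = Ψ.obj x := by
  cases h; rfl

theorem map1_congr {Φ Ψ : CrossedGroupoidHom K L} (h : Φ = Ψ) {x y : K.Obj} (f : K.Hom x y) :
    Ψ.map1 f = L.hcast (obj_congr h x) (obj_congr h y) (Φ.map1 f) := by cases h; rfl

theorem map2_congr {Φ Ψ : CrossedGroupoidHom K L} (h : Φ = Ψ) {x : K.Obj} (a : K.G2 x) :
    Ψ.map2 a = L.cast2 (obj_congr h x) (Φ.map2 a) := by cases h; rfl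

end CrossedGroupoidHom
/-! ### Combinatorial lemmas -/

theorem orderHom_ext2 {q : ℕ} (f g : Fin 2 →o Fin (q + 1)) (h : ∀ m, f m = g m) : f = g :=
  OrderHom.ext f g (funext h)

@[simp] theorem edgeMap_app0 {q : ℕ} (i j : Fin (q + 1)) (h : i ≤ j) :
    edgeMap i j h (0 : Fin 2) = i := rfl

@[simp] theorem edgeMap_app1 {q : ℕ} (i j : Fin (q + 1)) (h : i ≤ j) :
    edgeMap i j h (1 : Fin 2) = j := rfl

@[simp] theorem triMap_app0 {q : ℕ} (i j k : Fin (q + 1)) (hij : i ≤ j) (hjk : j ≤ k) :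
    triMap i j k hij hjk (0 : Fin 3) = i := rfl

@[simp] theorem triMap_app1 {q : ℕ} (i j k : Fin (q + 1)) (hij : i ≤ j) (hjk : j ≤ k) :
    triMap i j k hij hjk (1 : Fin 3) = j := rfl

@[simp] theorem triMap_app2 {q : ℕ} (i j k : Fin (q + 1)) (hij : i ≤ j) (hjk : j ≤ k) :
    triMap i j k hij hjk (2 : Fin 3) = k := rfl

theorem fin2_cases (m : Fin 2) : m = 0 ∨ m = 1 := by omega

theorem tri_comp_edge01 {q : ℕ} (i j k : Fin (q + 1)) (hij : i ≤ j) (hjk : j ≤ k) :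
    (triMap i j k hij hjk).comp (edgeMap 0 1 (by decide)) = edgeMap i j hij := by
  apply orderHom_ext2; intro m
  rcases fin2_cases m with h | h <;> subst h <;> rfl

theorem tri_comp_edge12 {q : ℕ} (i j k : Fin (q + 1)) (hij : i ≤ j) (hjk : j ≤ k) :
    (triMap i j k hij hjk).comp (edgeMap 1 2 (by decide)) = edgeMap j k hjk := by
  apply orderHom_ext2; intro m
  rcases fin2_cases m with h | h <;> subst h <;> rfl

theorem tri_comp_edge02 {q : ℕ} (i j k : Fin (q + 1)) (hij : i ≤ j) (hjk : j ≤ k) :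
    (triMap i j k hij hjk).comp (edgeMap 0 2 (by decide)) = edgeMap i k (hij.trans hjk) := by
  apply orderHom_ext2; intro m
  rcases fin2_cases m with h | h <;> subst h <;> rfl

/-! ### Push machinery -/

namespace CosimplicialCrossedGroupoid

variable (G : CosimplicialCrossedGroupoid)

/-- Pushing a 1-morphism between vertex objects over two base points. -/
def push1'' {x y : (G.obj 0).Obj} {p q : ℕ} (α : Fin (p + 1) →o Fin (q + 1))
    {i j : Fin (p + 1)} (g : (G.obj p).Hom (G.X x p i) (G.X y p j)) :
    (G.obj q).Hom (G.X x q (α i)) (G.X y q (α j)) :=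
  (G.obj q).hcast (G.X_push x α i) (G.X_push y α j) ((G.map α).map1 g)

theorem push1_eq {x : (G.obj 0).Obj} {p q : ℕ} (α : Fin (p + 1) →o Fin (q + 1))
    {i j : Fin (p + 1)} (g : (G.obj p).Hom (G.X x p i) (G.X x p j)) :
    G.push1 α g = G.push1'' α g := rfl

/-- Pushing a 0-level 1-morphism to the vertex (i) of level q. -/
def pushV {y z : (G.obj 0).Obj} (q : ℕ) (i : Fin (q + 1)) (f : (G.obj 0).Hom y z) :
    (G.obj q).Hom (G.X y q i) (G.X z q i) :=
  (G.map (vtxMap i)).map1 f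

/-- Pushing a 0-level 2-morphism to the vertex (i) of level q. -/
def pushV2 {y : (G.obj 0).Obj} (q : ℕ) (i : Fin (q + 1)) (e : (G.obj 0).G2 y) :
    (G.obj q).G2 (G.X y q i) :=
  (G.map (vtxMap i)).map2 e

theorem push1''_comp {x y z : (G.obj 0).Obj} {p q : ℕ} (α : Fin (p + 1) →o Fin (q + 1))
    {i j k : Fin (p + 1)} (h : (G.obj p).Hom (G.X y p j) (G.X z p k))
    (g : (G.obj p).Hom (G.X x p i) (G.X y p j)) :
    G.push1'' α ((G.obj p).comp h g) = (G.obj q).comp (G.push1'' α h) (G.push1'' α g) := by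
  unfold push1''
  rw [(G.map α).map1_comp]
  exact (G.obj q).hcast_comp _ _ _ _ _

theorem push1''_inv {x y : (G.obj 0).Obj} {p q : ℕ} (α : Fin (p + 1) →o Fin (q + 1))
    {i j : Fin (p + 1)} (g : (G.obj p).Hom (G.X x p i) (G.X y p j)) :
    G.push1'' α ((G.obj p).inv g) = (G.obj q).inv (G.push1'' α g) := by
  unfold push1''
  rw [(G.map α).map1_inv]
  exact (G.obj q).hcast_inv _ _ _

theorem push1''_D {x : (G.obj 0).Obj} {p q : ℕ} (α : Fin (p + 1) →o Fin (q + 1))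
    {i : Fin (p + 1)} (a : (G.obj p).G2 (G.X x p i)) :
    G.push1'' α ((G.obj p).D a) = (G.obj q).D (G.push2 α a) := by
  unfold push1'' push2
  rw [(G.map α).map_D]
  exact ((G.obj q).D_cast2 _ _).symm

theorem push2_mul {x : (G.obj 0).Obj} {p q : ℕ} (α : Fin (p + 1) →o Fin (q + 1))
    {i : Fin (p + 1)} (a b : (G.obj p).G2 (G.X x p i)) :
    G.push2 α ((G.obj p).mul a b) = (G.obj q).mul (G.push2 α a) (G.push2 α b) := by
  unfold push2
  rw [(G.map α).map2_mul]
  exact (G.obj q).cast2_mul _ _ _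

theorem push2_inv2 {x : (G.obj 0).Obj} {p q : ℕ} (α : Fin (p + 1) →o Fin (q + 1))
    {i : Fin (p + 1)} (a : (G.obj p).G2 (G.X x p i)) :
    G.push2 α ((G.obj p).inv2 a) = (G.obj q).inv2 (G.push2 α a) := by
  unfold push2
  rw [(G.map α).map2_inv2]
  exact (G.obj q).cast2_inv2 _ _

theorem push2_Ad {x y : (G.obj 0).Obj} {p q : ℕ} (α : Fin (p + 1) →o Fin (q + 1))
    {i j : Fin (p + 1)} (g : (G.obj p).Hom (G.X x p i) (G.X y p j))
    (a : (G.obj p).G2 (G.X x p i)) :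
    G.push2 α ((G.obj p).Ad g a) = (G.obj q).Ad (G.push1'' α g) (G.push2 α a) := by
  unfold push2 push1''
  rw [(G.map α).map_Ad]
  exact ((G.obj q).Ad_hcast _ _ _ _).symm

theorem push1''_congr_map {p q : ℕ} {α β : Fin (p + 1) →o Fin (q + 1)} (hαβ : α = β)
    {x y : (G.obj 0).Obj} {i j : Fin (p + 1)} (g : (G.obj p).Hom (G.X x p i) (G.X y p j)) :
    G.push1'' α g = (G.obj q).hcast (by rw [hαβ]) (by rw [hαβ]) (G.push1'' β g) := by
  cases hαβ; rfl

theorem push1''_push1'' {x y : (G.obj 0).Obj} {p q r : ℕ} (β : Fin (q + 1) →o Fin (r + 1))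
    (α : Fin (p + 1) →o Fin (q + 1)) {i j : Fin (p + 1)}
    (g : (G.obj p).Hom (G.X x p i) (G.X y p j)) :
    G.push1'' β (G.push1'' α g) = G.push1'' (β.comp α) g := by
  unfold push1''
  have h := CrossedGroupoidHom.map1_congr (G.map_comp β α) g
  rw [show ((G.map β).comp (G.map α)).map1 g = (G.map β).map1 ((G.map α).map1 g) from rfl] at h
  erw [(G.map β).map1_hcast, (G.obj r).hcast_hcast, h, (G.obj r).hcast_hcast]
  rfl

theorem push2_push2 {x : (G.obj 0).Obj} {p q r : ℕ} (β : Fin (q + 1) →o Fin (r + 1))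
    (α : Fin (p + 1) →o Fin (q + 1)) {i : Fin (p + 1)} (a : (G.obj p).G2 (G.X x p i)) :
    G.push2 β (G.push2 α a) = G.push2 (β.comp α) a := by
  unfold push2
  have h := CrossedGroupoidHom.map2_congr (G.map_comp β α) a
  rw [show ((G.map β).comp (G.map α)).map2 a = (G.map β).map2 ((G.map α).map2 a) from rfl] at h
  erw [(G.map β).map2_cast2, (G.obj r).cast2_cast2, h, (G.obj r).cast2_cast2]
  rfl

theorem push1''_pushV {y z : (G.obj 0).Obj} {p q : ℕ} (α : Fin (p + 1) →o Fin (q + 1))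
    (i : Fin (p + 1)) (f : (G.obj 0).Hom y z) :
    G.push1'' α (G.pushV p i f) = G.pushV q (α i) f := by
  unfold push1'' pushV
  have h : (G.map α).comp (G.map (vtxMap i)) = G.map (vtxMap (α i)) := by
    rw [← G.map_comp, comp_vtxMap]
  erw [show (G.map α).map1 ((G.map (vtxMap i)).map1 f)
      = ((G.map α).comp (G.map (vtxMap i))).map1 f from rfl,
    CrossedGroupoidHom.map1_congr h f]
  rfl

theorem push2_pushV2 {y : (G.obj 0).Obj} {p q : ℕ} (α : Fin (p + 1) →o Fin (q + 1))
    (i : Fin (p + 1)) (e : (G.obj 0).G2 y) :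
    G.push2 α (G.pushV2 p i e) = G.pushV2 q (α i) e := by
  unfold push2 pushV2
  have h : (G.map α).comp (G.map (vtxMap i)) = G.map (vtxMap (α i)) := by
    rw [← G.map_comp, comp_vtxMap]
  erw [show (G.map α).map2 ((G.map (vtxMap i)).map2 e)
      = ((G.map α).comp (G.map (vtxMap i))).map2 e from rfl,
    CrossedGroupoidHom.map2_congr h e]
  rfl

theorem pushV_comp {y z w : (G.obj 0).Obj} (q : ℕ) (i : Fin (q + 1)) (g : (G.obj 0).Hom z w)
    (f : (G.obj 0).Hom y z) :
    G.pushV q i ((G.obj 0).comp g f) = (G.obj q).comp (G.pushV q i g) (G.pushV q i f) :=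
  (G.map (vtxMap i)).map1_comp g f

theorem pushV_inv {y z : (G.obj 0).Obj} (q : ℕ) (i : Fin (q + 1)) (f : (G.obj 0).Hom y z) :
    G.pushV q i ((G.obj 0).inv f) = (G.obj q).inv (G.pushV q i f) :=
  (G.map (vtxMap i)).map1_inv f

theorem pushV_D {y : (G.obj 0).Obj} (q : ℕ) (i : Fin (q + 1)) (e : (G.obj 0).G2 y) :
    G.pushV q i ((G.obj 0).D e) = (G.obj q).D (G.pushV2 q i e) :=
  (G.map (vtxMap i)).map_D e

theorem pushV2_mul {y : (G.obj 0).Obj} (q : ℕ) (i : Fin (q + 1)) (a b : (G.obj 0).G2 y) :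
    G.pushV2 q i ((G.obj 0).mul a b) = (G.obj q).mul (G.pushV2 q i a) (G.pushV2 q i b) :=
  (G.map (vtxMap i)).map2_mul a b

theorem pushV2_inv2 {y : (G.obj 0).Obj} (q : ℕ) (i : Fin (q + 1)) (a : (G.obj 0).G2 y) :
    G.pushV2 q i ((G.obj 0).inv2 a) = (G.obj q).inv2 (G.pushV2 q i a) :=
  (G.map (vtxMap i)).map2_inv2 a

theorem pushV2_Ad {y z : (G.obj 0).Obj} (q : ℕ) (i : Fin (q + 1)) (f : (G.obj 0).Hom y z)
    (a : (G.obj 0).G2 y) :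
    G.pushV2 q i ((G.obj 0).Ad f a) = (G.obj q).Ad (G.pushV q i f) (G.pushV2 q i a) :=
  (G.map (vtxMap i)).map_Ad f a

end CosimplicialCrossedGroupoid
/-! ### Core computations in a single crossed groupoid -/

namespace CrossedGroupoid

variable (K : CrossedGroupoid)

attribute [simp] CrossedGroupoid.D_Ad CrossedGroupoid.Ad_comp

/-- `Ad (D c)⁻¹` is conjugation by `c⁻¹`. -/
theorem Ad_D_inv {x : K.Obj} (c u : K.G2 x) :
    K.Ad (K.inv (K.D c)) u = K.mul (K.inv2 c) (K.mul u c) := by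
  have h := K.peiffer (K.inv2 c) u
  rw [K.D_inv2] at h
  rw [h, K.inv2_inv2, K.mul_assoc]

/-- Peiffer commutation with a trailing factor. -/
theorem mul_comm_D' {x : K.Obj} (b u t : K.G2 x) :
    K.mul u (K.mul b t) = K.mul b (K.mul (K.Ad (K.inv (K.D b)) u) t) := by
  rw [← K.mul_assoc, K.mul_comm_D b u, K.mul_assoc]

/-- `D c` commutes past `g` at the cost of `Ad g⁻¹`. -/
theorem D_comm {x y : K.Obj} (g : K.Hom x y) (c : K.G2 y) :
    K.comp (K.D c) g = K.comp g (K.D (K.Ad (K.inv g) c)) := by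
  rw [K.D_Ad, K.inv_inv, ← K.comp_assoc, ← K.comp_assoc, K.comp_inv, K.id_comp]

theorem D_comm' {x y z : K.Obj} (g : K.Hom x y) (c : K.G2 y) (t : K.Hom z x) :
    K.comp (K.D c) (K.comp g t) = K.comp g (K.comp (K.D (K.Ad (K.inv g) c)) t) := by
  rw [← K.comp_assoc, ← K.comp_assoc, K.D_comm]

/-- Transport of the 1-cocycle descent condition along a gauge pair. -/
theorem descent1_core {x0 x1 x2 z0 z1 z2 : K.Obj}
    (g01 : K.Hom x0 x1) (g12 : K.Hom x1 x2) (g02 : K.Hom x0 x2)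
    (f0 : K.Hom x0 z0) (f1 : K.Hom x1 z1) (f2 : K.Hom x2 z2)
    (b c01 c02 : K.G2 x0) (c12 : K.G2 x1)
    (hb : K.comp (K.comp (K.inv g02) g12) g01 = K.D b) :
    K.comp (K.comp
        (K.inv (K.comp (K.comp (K.comp f2 g02) (K.D c02)) (K.inv f0)))
        (K.comp (K.comp (K.comp f2 g12) (K.D c12)) (K.inv f1)))
      (K.comp (K.comp (K.comp f1 g01) (K.D c01)) (K.inv f0))
    = K.D (K.Ad f0 (K.mul (K.mul (K.mul (K.inv2 c02) b) (K.Ad (K.inv g01) c12)) c01)) := by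
  have hD : K.D b = K.comp (K.comp (K.inv g02) g12) g01 := hb.symm
  simp only [K.D_Ad, K.D_mul, K.D_inv2, K.inv_comp', K.inv_inv, K.comp_assoc,
    K.inv_comp_cancel, K.comp_inv_cancel, hD]

/-- The inner (conjugation-free) part of the 2-cocycle transport. -/
theorem descent2_inner {x0 x1 x2 : K.Obj}
    (g01 : K.Hom x0 x1) (g02 : K.Hom x0 x2) (g12 : K.Hom x1 x2)
    (b013 b023 b012 c01 c02 c03 : K.G2 x0) (b123 c12 c13 : K.G2 x1) (c23 : K.G2 x2)
    (hb012 : K.comp (K.comp (K.inv g02) g12) g01 = K.D b012)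
    (hcoc : K.mul (K.mul (K.inv2 b013) b023) b012 = K.Ad (K.inv g01) b123) :
    K.mul (K.mul
        (K.inv2 (K.mul (K.mul (K.mul (K.inv2 c03) b013) (K.Ad (K.inv g01) c13)) c01))
        (K.mul (K.mul (K.mul (K.inv2 c03) b023) (K.Ad (K.inv g02) c23)) c02))
      (K.mul (K.mul (K.mul (K.inv2 c02) b012) (K.Ad (K.inv g01) c12)) c01)
    = K.mul (K.inv2 c01) (K.mul (K.Ad (K.inv g01)
        (K.mul (K.mul (K.mul (K.inv2 c13) b123) (K.Ad (K.inv g12) c23)) c12)) c01) := by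
  have key : K.Ad (K.inv (K.D b012)) (K.Ad (K.inv g02) c23)
      = K.Ad (K.inv g01) (K.Ad (K.inv g12) c23) := by
    have hh : K.comp g02 (K.D b012) = K.comp g12 g01 := by
      rw [← hb012]
      simp only [K.comp_assoc, K.comp_inv_cancel]
    rw [← K.Ad_comp,
      show K.comp (K.inv (K.D b012)) (K.inv g02) = K.inv (K.comp g02 (K.D b012)) from
        (K.inv_comp' _ _).symm,
      hh, K.inv_comp', K.Ad_comp]
  have hcoc' : ∀ t : K.G2 x0, K.mul (K.inv2 b013) (K.mul b023 (K.mul b012 t))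
      = K.mul (K.Ad (K.inv g01) b123) t := by
    intro t
    have h := congrArg (fun z => K.mul z t) hcoc
    simpa only [K.mul_assoc] using h
  simp only [K.inv2_mul', K.inv2_inv2, K.Ad_mul, K.Ad_inv2, K.mul_assoc,
    K.inv2_mul_cancel, K.mul_inv2_cancel]
  rw [K.mul_comm_D' b012 (K.Ad (K.inv g02) c23)
      (K.mul (K.Ad (K.inv g01) c12) c01), key]
  rw [hcoc']

end CrossedGroupoid
namespace CrossedGroupoid

variable (K : CrossedGroupoid)

/-- Transport of the 2-cocycle descent condition along a gauge pair. -/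
theorem descent2_core {x0 x1 x2 z0 z1 : K.Obj}
    (g01 : K.Hom x0 x1) (g02 : K.Hom x0 x2) (g12 : K.Hom x1 x2)
    (f0 : K.Hom x0 z0) (f1 : K.Hom x1 z1)
    (b013 b023 b012 c01 c02 c03 : K.G2 x0) (b123 c12 c13 : K.G2 x1) (c23 : K.G2 x2)
    (hb012 : K.comp (K.comp (K.inv g02) g12) g01 = K.D b012)
    (hcoc : K.mul (K.mul (K.inv2 b013) b023) b012 = K.Ad (K.inv g01) b123) :
    K.mul (K.mul
        (K.inv2 (K.Ad f0 (K.mul (K.mul (K.mul (K.inv2 c03) b013) (K.Ad (K.inv g01) c13)) c01)))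
        (K.Ad f0 (K.mul (K.mul (K.mul (K.inv2 c03) b023) (K.Ad (K.inv g02) c23)) c02)))
      (K.Ad f0 (K.mul (K.mul (K.mul (K.inv2 c02) b012) (K.Ad (K.inv g01) c12)) c01))
    = K.Ad (K.inv (K.comp (K.comp (K.comp f1 g01) (K.D c01)) (K.inv f0)))
        (K.Ad f1 (K.mul (K.mul (K.mul (K.inv2 c13) b123) (K.Ad (K.inv g12) c23)) c12)) := by
  have inner := K.descent2_inner g01 g02 g12 b013 b023 b012 c01 c02 c03 b123 c12 c13 c23
    hb012 hcoc
  rw [← K.Ad_inv2, ← K.Ad_mul, ← K.Ad_mul, inner]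
  simp only [K.inv_comp', K.inv_inv, K.Ad_comp]
  rw [← K.Ad_comp (K.inv f1) f1, K.inv_comp, K.Ad_id, K.Ad_D_inv]

/-- D of the two sides of the twisted 2-cocycle condition agree automatically. -/
theorem cocycle_D_core {x0 x1 x2 x3 : K.Obj}
    (g01 : K.Hom x0 x1) (g02 : K.Hom x0 x2) (g03 : K.Hom x0 x3)
    (g12 : K.Hom x1 x2) (g13 : K.Hom x1 x3) (g23 : K.Hom x2 x3)
    (a013 a023 a012 : K.G2 x0) (a123 : K.G2 x1)
    (h013 : K.D a013 = K.comp (K.comp (K.inv g03) g13) g01)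
    (h023 : K.D a023 = K.comp (K.comp (K.inv g03) g23) g02)
    (h012 : K.D a012 = K.comp (K.comp (K.inv g02) g12) g01)
    (h123 : K.D a123 = K.comp (K.comp (K.inv g13) g23) g12) :
    K.D (K.mul (K.mul (K.inv2 a013) a023) a012) = K.D (K.Ad (K.inv g01) a123) := by
  simp only [K.D_mul, K.D_inv2, K.D_Ad, h013, h023, h012, h123, K.inv_comp', K.inv_inv,
    K.comp_assoc, K.inv_comp_cancel, K.comp_inv_cancel]

/-- Modifying the 0-level part of a gauge pair by `D ε` (core computation). -/
theorem gauge_modify_core {y0 y1 y2 z0 : K.Obj}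
    (g01 : K.Hom y0 y1) (g02 : K.Hom y0 y2) (g12 : K.Hom y1 y2) (f0 : K.Hom y0 z0)
    (a c01 c02 : K.G2 y0) (c12 : K.G2 y1) (e0 : K.G2 y0) (e1 : K.G2 y1) (e2 : K.G2 y2)
    (hD : K.D a = K.comp (K.comp (K.inv g02) g12) g01) :
    K.Ad (K.comp f0 (K.D e0)) (K.mul (K.mul (K.mul
        (K.inv2 (K.mul (K.mul (K.inv2 (K.Ad (K.inv g02) e2)) c02) e0)) a)
        (K.Ad (K.inv g01) (K.mul (K.mul (K.inv2 (K.Ad (K.inv g12) e2)) c12) e1)))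
      (K.mul (K.mul (K.inv2 (K.Ad (K.inv g01) e1)) c01) e0))
    = K.Ad f0 (K.mul (K.mul (K.mul (K.inv2 c02) a) (K.Ad (K.inv g01) c12)) c01) := by
  rw [K.Ad_comp]
  congr 1
  have hpe : ∀ u : K.G2 y0, K.Ad (K.D e0) u = K.mul e0 (K.mul u (K.inv2 e0)) := by
    intro u; rw [K.peiffer, K.mul_assoc]
  rw [hpe]
  have key : K.mul (K.Ad (K.inv g02) e2) a
      = K.mul a (K.Ad (K.inv g01) (K.Ad (K.inv g12) e2)) := by
    rw [K.mul_comm_D a (K.Ad (K.inv g02) e2)]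
    congr 1
    rw [← K.Ad_comp,
      show K.comp (K.inv (K.D a)) (K.inv g02) = K.inv (K.comp g02 (K.D a)) from
        (K.inv_comp' _ _).symm,
      show K.comp g02 (K.D a) = K.comp g12 g01 from by
        rw [hD]; simp only [K.comp_assoc, K.comp_inv_cancel],
      K.inv_comp', K.Ad_comp]
  simp only [K.inv2_mul', K.inv2_inv2, K.Ad_mul, K.Ad_inv2, K.mul_assoc,
    K.inv2_mul_cancel, K.mul_inv2_cancel]
  rw [← K.mul_assoc (K.Ad (K.inv g02) e2) a, key]
  simp only [K.mul_assoc, K.inv2_mul_cancel, K.mul_inv2_cancel, K.mul_inv2, K.inv2_mul,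
    K.mul_one, K.one_mul]

/-- Algebra for extracting the gauge 1-condition from a lift up to `D`. -/
theorem gauge1_core {y0 y1 z0 z1 : K.Obj} (f0 : K.Hom y0 z0) (f1 : K.Hom y1 z1)
    (h : K.Hom y0 y1) (g : K.Hom z0 z1) (c : K.G2 z0)
    (hg : K.comp (K.comp f1 h) (K.inv f0) = K.comp g (K.D c)) :
    g = K.comp (K.comp (K.comp f1 h) (K.D (K.inv2 (K.Ad (K.inv f0) c)))) (K.inv f0) := by
  have : K.comp (K.comp (K.comp f1 h) (K.inv f0)) (K.inv (K.D c)) = g := by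
    rw [hg]; simp only [K.comp_assoc, K.comp_inv_cancel, K.comp_inv, K.comp_id]
  rw [← this]
  simp only [K.D_inv2, K.D_Ad, K.inv_comp', K.inv_inv, K.comp_assoc, K.inv_comp_cancel,
    K.comp_inv_cancel, K.comp_inv, K.comp_id]

end CrossedGroupoid
namespace CosimplicialCrossedGroupoid

variable (G : CosimplicialCrossedGroupoid)

/-- The gauge-transformed 1-morphism part. -/
def gaugeG {x x' : (G.obj 0).Obj} (f : (G.obj 0).Hom x x')
    (g : (G.obj 1).Hom (G.X x 1 0) (G.X x 1 1)) (c : (G.obj 1).G2 (G.X x 1 0)) :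
    (G.obj 1).Hom (G.X x' 1 0) (G.X x' 1 1) :=
  (G.obj 1).comp ((G.obj 1).comp ((G.obj 1).comp (G.pushV 1 1 f) g) ((G.obj 1).D c))
    ((G.obj 1).inv (G.pushV 1 0 f))

theorem push2_congr_map {p q : ℕ} {α β : Fin (p + 1) →o Fin (q + 1)} (hαβ : α = β)
    {x : (G.obj 0).Obj} {i : Fin (p + 1)} (a : (G.obj p).G2 (G.X x p i)) :
    G.push2 α a = (G.obj q).cast2 (by rw [hαβ]) (G.push2 β a) := by
  cases hαβ; rfl

theorem push2_tri_edge01 {q : ℕ} (i j k : Fin (q + 1)) (hij : i ≤ j) (hjk : j ≤ k)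
    {x : (G.obj 0).Obj} (c : (G.obj 1).G2 (G.X x 1 0)) :
    G.push2 (triMap i j k hij hjk) (G.push2 (edgeMap 0 1 (by decide)) c)
      = G.push2 (edgeMap i j hij) c := by
  rw [G.push2_push2]
  exact G.push2_congr_map (tri_comp_edge01 i j k hij hjk) c

theorem push2_tri_edge12 {q : ℕ} (i j k : Fin (q + 1)) (hij : i ≤ j) (hjk : j ≤ k)
    {x : (G.obj 0).Obj} (c : (G.obj 1).G2 (G.X x 1 0)) :
    G.push2 (triMap i j k hij hjk) (G.push2 (edgeMap 1 2 (by decide)) c)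
      = G.push2 (edgeMap j k hjk) c := by
  rw [G.push2_push2]
  exact G.push2_congr_map (tri_comp_edge12 i j k hij hjk) c

theorem push2_tri_edge02 {q : ℕ} (i j k : Fin (q + 1)) (hij : i ≤ j) (hjk : j ≤ k)
    {x : (G.obj 0).Obj} (c : (G.obj 1).G2 (G.X x 1 0)) :
    G.push2 (triMap i j k hij hjk) (G.push2 (edgeMap 0 2 (by decide)) c)
      = G.push2 (edgeMap i k (hij.trans hjk)) c := by
  rw [G.push2_push2]
  exact G.push2_congr_map (tri_comp_edge02 i j k hij hjk) c

theorem push1''_tri_edge01 {q : ℕ} (i j k : Fin (q + 1)) (hij : i ≤ j) (hjk : j ≤ k)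
    {x y : (G.obj 0).Obj} (g : (G.obj 1).Hom (G.X x 1 0) (G.X y 1 1)) :
    G.push1'' (triMap i j k hij hjk) (G.push1'' (edgeMap 0 1 (by decide)) g)
      = G.push1'' (edgeMap i j hij) g := by
  rw [G.push1''_push1'']
  have h := G.push1''_congr_map (tri_comp_edge01 i j k hij hjk) (x := x) (y := y) g
  exact h

theorem push1''_tri_edge12 {q : ℕ} (i j k : Fin (q + 1)) (hij : i ≤ j) (hjk : j ≤ k)
    {x y : (G.obj 0).Obj} (g : (G.obj 1).Hom (G.X x 1 0) (G.X y 1 1)) :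
    G.push1'' (triMap i j k hij hjk) (G.push1'' (edgeMap 1 2 (by decide)) g)
      = G.push1'' (edgeMap j k hjk) g := by
  rw [G.push1''_push1'']
  exact G.push1''_congr_map (tri_comp_edge12 i j k hij hjk) (x := x) (y := y) g

theorem push1''_tri_edge02 {q : ℕ} (i j k : Fin (q + 1)) (hij : i ≤ j) (hjk : j ≤ k)
    {x y : (G.obj 0).Obj} (g : (G.obj 1).Hom (G.X x 1 0) (G.X y 1 1)) :
    G.push1'' (triMap i j k hij hjk) (G.push1'' (edgeMap 0 2 (by decide)) g)
      = G.push1'' (edgeMap i k (hij.trans hjk)) g := by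
  rw [G.push1''_push1'']
  exact G.push1''_congr_map (tri_comp_edge02 i j k hij hjk) (x := x) (y := y) g

/-- Pushing the gauge-transformed 1-morphism along an edge. -/
theorem push_gaugeG {q : ℕ} (i j : Fin (q + 1)) (hij : i ≤ j) {x x' : (G.obj 0).Obj}
    (f : (G.obj 0).Hom x x') (g : (G.obj 1).Hom (G.X x 1 0) (G.X x 1 1))
    (c : (G.obj 1).G2 (G.X x 1 0)) :
    G.push1'' (edgeMap i j hij) (G.gaugeG f g c)
      = (G.obj q).comp ((G.obj q).comp ((G.obj q).comp (G.pushV q j f)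
          (G.push1'' (edgeMap i j hij) g)) ((G.obj q).D (G.push2 (edgeMap i j hij) c)))
        ((G.obj q).inv (G.pushV q i f)) := by
  unfold gaugeG
  rw [G.push1''_comp, G.push1''_comp, G.push1''_comp, G.push1''_inv, G.push1''_D,
    G.push1''_pushV, G.push1''_pushV]
  rfl

/-- Pushing the transported 2-morphism along a triangle. -/
theorem push_transportA (i j k : Fin 4) (hij : i ≤ j) (hjk : j ≤ k)
    {x x' : (G.obj 0).Obj} (f : (G.obj 0).Hom x x')
    (g : (G.obj 1).Hom (G.X x 1 0) (G.X x 1 1))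
    (a : (G.obj 2).G2 (G.X x 2 0)) (c : (G.obj 1).G2 (G.X x 1 0)) :
    G.push2 (triMap i j k hij hjk) (G.transportA f g a c)
      = (G.obj 3).Ad (G.pushV 3 i f) ((G.obj 3).mul ((G.obj 3).mul ((G.obj 3).mul
          ((G.obj 3).inv2 (G.push2 (edgeMap i k (hij.trans hjk)) c))
          (G.push2 (triMap i j k hij hjk) a))
          ((G.obj 3).Ad ((G.obj 3).inv (G.push1'' (edgeMap i j hij) g))
            (G.push2 (edgeMap j k hjk) c)))
        (G.push2 (edgeMap i j hij) c)) := by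
  unfold transportA
  erw [show (G.map (vtxMap (0 : Fin 3))).map1 f = G.pushV 2 0 f from rfl,
    show G.push1 (edgeMap 0 1 (by decide)) g = G.push1'' (edgeMap 0 1 (by decide)) g from rfl,
    G.push2_Ad, G.push2_mul, G.push2_mul, G.push2_mul, G.push2_inv2, G.push2_Ad,
    G.push1''_inv, G.push1''_pushV,
    G.push2_tri_edge01, G.push2_tri_edge02, G.push2_tri_edge12, G.push1''_tri_edge01]
  rfl

/-- Pushing the 1-cocycle condition along a triangle. -/
theorem push_cond1 (i j k : Fin 4) (hij : i ≤ j) (hjk : j ≤ k)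
    {x : (G.obj 0).Obj} {g : (G.obj 1).Hom (G.X x 1 0) (G.X x 1 1)}
    {a : (G.obj 2).G2 (G.X x 2 0)}
    (h1 : (G.obj 2).comp ((G.obj 2).comp
        ((G.obj 2).inv (G.push1 (edgeMap 0 2 (by decide)) g))
        (G.push1 (edgeMap 1 2 (by decide)) g)) (G.push1 (edgeMap 0 1 (by decide)) g)
      = (G.obj 2).D a) :
    (G.obj 3).comp ((G.obj 3).comp
        ((G.obj 3).inv (G.push1'' (edgeMap i k (hij.trans hjk)) g))
        (G.push1'' (edgeMap j k hjk) g)) (G.push1'' (edgeMap i j hij) g)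
      = (G.obj 3).D (G.push2 (triMap i j k hij hjk) a) := by
  have h := congrArg (G.push1'' (triMap i j k hij hjk)) h1
  erw [G.push1_eq, G.push1_eq, G.push1_eq, G.push1''_comp, G.push1''_comp, G.push1''_inv,
    G.push1''_D, G.push1''_tri_edge01, G.push1''_tri_edge12, G.push1''_tri_edge02] at h
  exact h

/-- A gauge transform of a descent datum is a descent datum. -/
theorem isDescent_gauge {x x' : (G.obj 0).Obj} (f : (G.obj 0).Hom x x')
    {g : (G.obj 1).Hom (G.X x 1 0) (G.X x 1 1)} {a : (G.obj 2).G2 (G.X x 2 0)}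
    (c : (G.obj 1).G2 (G.X x 1 0)) (hd : G.IsDescent x g a) :
    G.IsDescent x' (G.gaugeG f g c) (G.transportA f g a c) := by
  obtain ⟨hd1, hd2⟩ := hd
  constructor
  · rw [G.push1_eq, G.push1_eq, G.push1_eq, G.push_gaugeG, G.push_gaugeG, G.push_gaugeG]
    exact (G.obj 2).descent1_core _ _ _ _ _ _ _ _ _ _ hd1
  · rw [G.push_transportA, G.push_transportA, G.push_transportA, G.push_transportA,
      G.push1_eq (edgeMap 0 1 (by decide)) (G.gaugeG f g c), G.push_gaugeG]
    exact (G.obj 3).descent2_core _ _ _ _ _ _ _ _ _ _ _ _ _ _ _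
      (G.push_cond1 0 1 2 (by decide) (by decide) hd1) hd2

end CosimplicialCrossedGroupoid
/-! ### Naturality of the morphism `F` with respect to pushes -/

namespace CosimplicialMor

variable {G H : CosimplicialCrossedGroupoid} (F : CosimplicialMor G H)

/-- Image of a 1-morphism between pushed vertex objects. -/
def mapX1 (p : ℕ) {x y : (G.obj 0).Obj} {i j : Fin (p + 1)}
    (g : (G.obj p).Hom (G.X x p i) (G.X y p j)) :
    (H.obj p).Hom (H.X (F.objD x) p i) (H.X (F.objD y) p j) :=
  (H.obj p).hcast (F.app_X x p i) (F.app_X y p j) ((F.app p).map1 g)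

/-- Image of a 2-morphism at a pushed vertex object. -/
def mapX2 (p : ℕ) {x : (G.obj 0).Obj} {i : Fin (p + 1)} (a : (G.obj p).G2 (G.X x p i)) :
    (H.obj p).G2 (H.X (F.objD x) p i) :=
  (H.obj p).cast2 (F.app_X x p i) ((F.app p).map2 a)

theorem mapG_eq {x : (G.obj 0).Obj} (g : (G.obj 1).Hom (G.X x 1 0) (G.X x 1 1)) :
    F.mapG g = F.mapX1 1 g := rfl

theorem mapA_eq {x : (G.obj 0).Obj} (a : (G.obj 2).G2 (G.X x 2 0)) :
    F.mapA a = F.mapX2 2 a := rfl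

theorem mapC_eq {x : (G.obj 0).Obj} (c : (G.obj 1).G2 (G.X x 1 0)) :
    F.mapC c = F.mapX2 1 c := rfl

theorem mapX1_comp (p : ℕ) {x y z : (G.obj 0).Obj} {i j k : Fin (p + 1)}
    (h : (G.obj p).Hom (G.X y p j) (G.X z p k)) (g : (G.obj p).Hom (G.X x p i) (G.X y p j)) :
    F.mapX1 p ((G.obj p).comp h g) = (H.obj p).comp (F.mapX1 p h) (F.mapX1 p g) := by
  unfold mapX1
  rw [(F.app p).map1_comp]
  exact (H.obj p).hcast_comp _ _ _ _ _

theorem mapX1_inv (p : ℕ) {x y : (G.obj 0).Obj} {i j : Fin (p + 1)}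
    (g : (G.obj p).Hom (G.X x p i) (G.X y p j)) :
    F.mapX1 p ((G.obj p).inv g) = (H.obj p).inv (F.mapX1 p g) := by
  unfold mapX1
  rw [(F.app p).map1_inv]
  exact (H.obj p).hcast_inv _ _ _

theorem mapX1_D (p : ℕ) {x : (G.obj 0).Obj} {i : Fin (p + 1)} (a : (G.obj p).G2 (G.X x p i)) :
    F.mapX1 p ((G.obj p).D a) = (H.obj p).D (F.mapX2 p a) := by
  unfold mapX1 mapX2
  rw [(F.app p).map_D]
  exact ((H.obj p).D_cast2 _ _).symm

theorem mapX2_mul (p : ℕ) {x : (G.obj 0).Obj} {i : Fin (p + 1)}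
    (a b : (G.obj p).G2 (G.X x p i)) :
    F.mapX2 p ((G.obj p).mul a b) = (H.obj p).mul (F.mapX2 p a) (F.mapX2 p b) := by
  unfold mapX2
  rw [(F.app p).map2_mul]
  exact (H.obj p).cast2_mul _ _ _

theorem mapX2_inv2 (p : ℕ) {x : (G.obj 0).Obj} {i : Fin (p + 1)}
    (a : (G.obj p).G2 (G.X x p i)) :
    F.mapX2 p ((G.obj p).inv2 a) = (H.obj p).inv2 (F.mapX2 p a) := by
  unfold mapX2
  rw [(F.app p).map2_inv2]
  exact (H.obj p).cast2_inv2 _ _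

theorem mapX2_Ad (p : ℕ) {x y : (G.obj 0).Obj} {i j : Fin (p + 1)}
    (g : (G.obj p).Hom (G.X x p i) (G.X y p j)) (a : (G.obj p).G2 (G.X x p i)) :
    F.mapX2 p ((G.obj p).Ad g a) = (H.obj p).Ad (F.mapX1 p g) (F.mapX2 p a) := by
  unfold mapX1 mapX2
  rw [(F.app p).map_Ad]
  exact ((H.obj p).Ad_hcast _ _ _ _).symm

theorem mapX1_pushV (p : ℕ) (i : Fin (p + 1)) {x y : (G.obj 0).Obj}
    (f : (G.obj 0).Hom x y) :
    F.mapX1 p (G.pushV p i f) = H.pushV p i (F.mapF f) := by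
  have h := CrossedGroupoidHom.map1_congr (F.naturality (vtxMap i)) f
  exact h.symm

theorem mapX2_pushV2 (p : ℕ) (i : Fin (p + 1)) {x : (G.obj 0).Obj} (e : (G.obj 0).G2 x) :
    F.mapX2 p (G.pushV2 p i e) = H.pushV2 p i ((F.app 0).map2 e) := by
  have h := CrossedGroupoidHom.map2_congr (F.naturality (vtxMap i)) e
  exact h.symm

theorem mapX1_push (p q : ℕ) (α : Fin (p + 1) →o Fin (q + 1)) {x y : (G.obj 0).Obj}
    {i j : Fin (p + 1)} (g : (G.obj p).Hom (G.X x p i) (G.X y p j)) :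
    F.mapX1 q (G.push1'' α g) = H.push1'' α (F.mapX1 p g) := by
  unfold mapX1 CosimplicialCrossedGroupoid.push1''
  have h := CrossedGroupoidHom.map1_congr (F.naturality α) g
  rw [show ((H.map α).comp (F.app p)).map1 g = (H.map α).map1 ((F.app p).map1 g) from rfl] at h
  erw [(F.app q).map1_hcast, (H.map α).map1_hcast, (H.obj q).hcast_hcast,
    (H.obj q).hcast_hcast, h, (H.obj q).hcast_hcast]
  rfl

theorem mapX2_push (p q : ℕ) (α : Fin (p + 1) →o Fin (q + 1)) {x : (G.obj 0).Obj}
    {i : Fin (p + 1)} (a : (G.obj p).G2 (G.X x p i)) :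
    F.mapX2 q (G.push2 α a) = H.push2 α (F.mapX2 p a) := by
  unfold mapX2 CosimplicialCrossedGroupoid.push2
  have h := CrossedGroupoidHom.map2_congr (F.naturality α) a
  rw [show ((H.map α).comp (F.app p)).map2 a = (H.map α).map2 ((F.app p).map2 a) from rfl] at h
  erw [(F.app q).map2_cast2, (H.map α).map2_cast2, (H.obj q).cast2_cast2,
    (H.obj q).cast2_cast2, h, (H.obj q).cast2_cast2]
  rfl

end CosimplicialMor

/-! ### Lifting lemmas from a weak equivalence -/

namespace CrossedGroupoidHom

variable {K L : CrossedGroupoid} (Φ : CrossedGroupoidHom K L)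

theorem pi0Rel_equiv (K : CrossedGroupoid) : Equivalence K.pi0Rel where
  refl x := ⟨K.id x⟩
  symm h := ⟨K.inv h.some⟩
  trans h h' := ⟨K.comp h'.some h.some⟩

theorem homRel_equiv (K : CrossedGroupoid) (x x' : K.Obj) : Equivalence (K.homRel x x') where
  refl g := ⟨K.one x, by rw [K.D_one, K.comp_id]⟩
  symm := by
    rintro g g' ⟨c, rfl⟩
    exact ⟨K.inv2 c, by rw [K.D_inv2, K.comp_assoc, K.comp_inv, K.comp_id]⟩
  trans := by
    rintro g g' g'' ⟨c, rfl⟩ ⟨c', rfl⟩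
    exact ⟨K.mul c c', by rw [K.D_mul, K.comp_assoc]⟩

theorem weq_obj_surj (hw : Φ.IsWeakEquiv) (y : L.Obj) :
    ∃ x : K.Obj, Nonempty (L.Hom y (Φ.obj x)) := by
  obtain ⟨q, hq⟩ := hw.1.2 (Quot.mk _ y)
  obtain ⟨x, rfl⟩ := Quot.exists_rep q
  refine ⟨x, ?_⟩
  have : Quot.mk L.pi0Rel (Φ.obj x) = Quot.mk L.pi0Rel y := hq
  have h3 : L.pi0Rel (Φ.obj x) y :=
    ((pi0Rel_equiv L).eqvGen_iff).mp (Quot.eq.mp this)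
  exact ⟨L.inv h3.some⟩

theorem weq_hom_lift (hw : Φ.IsWeakEquiv) {x x' : K.Obj} (h : L.Hom (Φ.obj x) (Φ.obj x')) :
    ∃ (g : K.Hom x x') (c : L.G2 (Φ.obj x)), h = L.comp (Φ.map1 g) (L.D c) := by
  -- x and x' are isomorphic in K
  have h0 : Quot.mk K.pi0Rel x = Quot.mk K.pi0Rel x' := by
    apply hw.1.1
    exact Quot.sound ⟨h⟩
  have hk : K.pi0Rel x x' := ((pi0Rel_equiv K).eqvGen_iff).mp (Quot.eq.mp h0)
  obtain ⟨k⟩ := hk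
  -- lift the automorphism part using π₁-surjectivity
  set u : L.Hom (Φ.obj x) (Φ.obj x) := L.comp (L.inv (Φ.map1 k)) h with hu
  obtain ⟨q, hq⟩ := (hw.2.1 x).2 (Quot.mk _ u)
  obtain ⟨v, rfl⟩ := Quot.exists_rep q
  have : Quot.mk (L.homRel (Φ.obj x) (Φ.obj x)) (Φ.map1 v) = Quot.mk _ u := hq
  have hr : L.homRel (Φ.obj x) (Φ.obj x) (Φ.map1 v) u :=
    ((homRel_equiv L _ _).eqvGen_iff).mp (Quot.eq.mp this)
  obtain ⟨c, hc⟩ := hr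
  refine ⟨K.comp k v, c, ?_⟩
  rw [Φ.map1_comp, L.comp_assoc, ← hc, hu, L.comp_inv_cancel]

theorem weq_hom_lift_rel (hw : Φ.IsWeakEquiv) {x x' : K.Obj} (g g' : K.Hom x x')
    (c : L.G2 (Φ.obj x)) (h : Φ.map1 g' = L.comp (Φ.map1 g) (L.D c)) :
    ∃ c₁ : K.G2 x, g' = K.comp g (K.D c₁) ∧ Φ.map2 c₁ = c := by
  set w : K.Hom x x := K.comp (K.inv g) g' with hw'
  have hΦw : Φ.map1 w = L.D c := by
    rw [hw', Φ.map1_comp, Φ.map1_inv, h, L.inv_comp_cancel]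
  -- π₁-injectivity: w is D of something
  have h1 : Quot.mk (K.homRel x x) w = Quot.mk _ (K.id x) := by
    apply (hw.2.1 x).1
    show Quot.mk _ (Φ.map1 w) = Quot.mk _ (Φ.map1 (K.id x))
    rw [Φ.map1_id, hΦw]
    apply Quot.sound
    exact ((homRel_equiv L _ _).symm ⟨c, by rw [L.id_comp]⟩)
  have hr : K.homRel x x w (K.id x) :=
    ((homRel_equiv K _ _).eqvGen_iff).mp (Quot.eq.mp h1)
  obtain ⟨c₀, hc₀⟩ := ((homRel_equiv K x x).symm hr)
  rw [K.id_comp] at hc₀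
  -- compare Φ c₀ with c using π₂-surjectivity
  have hD : L.D (Φ.map2 c₀) = L.D c := by
    rw [← Φ.map_D, ← hc₀, hΦw]
  have hker : L.D (L.mul (L.inv2 (Φ.map2 c₀)) c) = L.id (Φ.obj x) := by
    rw [L.D_mul, L.D_inv2, hD, L.inv_comp]
  obtain ⟨k₀, hk₀⟩ := (hw.2.2 x).2 ⟨L.mul (L.inv2 (Φ.map2 c₀)) c, hker⟩
  have hk₀1 : Φ.map2 k₀.1 = L.mul (L.inv2 (Φ.map2 c₀)) c := congrArg Subtype.val hk₀
  refine ⟨K.mul c₀ k₀.1, ?_, ?_⟩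
  · rw [K.D_mul, k₀.2, K.comp_id, ← hc₀, hw', K.comp_inv_cancel]
  · rw [Φ.map2_mul, hk₀1, L.mul_inv2_cancel]

theorem weq_pi2_inj (hw : Φ.IsWeakEquiv) {x : K.Obj} (a a' : K.G2 x)
    (hD : K.D a = K.D a') (he : Φ.map2 a = Φ.map2 a') : a = a' := by
  have hker : K.D (K.mul (K.inv2 a) a') = K.id x := by
    rw [K.D_mul, K.D_inv2, hD, K.inv_comp]
  have h1 : (⟨K.mul (K.inv2 a) a', hker⟩ : K.pi2 x) = ⟨K.one x, K.D_one x⟩ := by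
    apply (hw.2.2 x).1
    apply Subtype.ext
    show Φ.map2 (K.mul (K.inv2 a) a') = Φ.map2 (K.one x)
    rw [Φ.map2_mul, Φ.map2_inv2, he, L.inv2_mul, Φ.map2_one]
  have h2 : K.mul (K.inv2 a) a' = K.one x := congrArg Subtype.val h1
  have : K.mul a (K.mul (K.inv2 a) a') = a' := K.mul_inv2_cancel a a'
  rw [← this, h2, K.mul_one]

end CrossedGroupoidHom
/-! ### Assembly: the main theorem -/

namespace CrossedGroupoid

theorem cast2_injective (K : CrossedGroupoid) {x x' : K.Obj} (e : x = x') {a b : K.G2 x}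
    (h : K.cast2 e a = K.cast2 e b) : a = b := by cases e; exact h

end CrossedGroupoid

namespace CosimplicialMor

open CosimplicialCrossedGroupoid

variable {G H : CosimplicialCrossedGroupoid} (F : CosimplicialMor G H)

/-- `F` commutes with `transportA`. -/
theorem map_transportA {x x' : (G.obj 0).Obj} (f : (G.obj 0).Hom x x')
    (g : (G.obj 1).Hom (G.X x 1 0) (G.X x 1 1)) (a : (G.obj 2).G2 (G.X x 2 0))
    (c : (G.obj 1).G2 (G.X x 1 0)) :
    F.mapA (G.transportA f g a c)
      = H.transportA (F.mapF f) (F.mapG g) (F.mapA a) (F.mapC c) := by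
  unfold CosimplicialCrossedGroupoid.transportA
  erw [show (G.map (vtxMap (0 : Fin 3))).map1 f = G.pushV 2 0 f from rfl,
    show (H.map (vtxMap (0 : Fin 3))).map1 (F.mapF f) = H.pushV 2 0 (F.mapF f) from rfl,
    F.mapA_eq, F.mapX2_Ad, F.mapX1_pushV, F.mapX2_mul, F.mapX2_mul, F.mapX2_mul,
    F.mapX2_inv2, F.mapX2_Ad, F.mapX1_inv,
    G.push1_eq, F.mapX1_push]
  have hX : ∀ (u : (G.obj 1).G2 (G.X x 1 0)) (e : Fin 2 →o Fin 3),
      F.mapX2 2 (G.push2 e u) = H.push2 e (F.mapC u) := fun u e => F.mapX2_push 1 2 e u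
  erw [hX, hX, hX]
  rfl

/-- `F` preserves the descent conditions. -/
theorem map_isDescent {x : (G.obj 0).Obj} {g : (G.obj 1).Hom (G.X x 1 0) (G.X x 1 1)}
    {a : (G.obj 2).G2 (G.X x 2 0)} (hd : G.IsDescent x g a) :
    H.IsDescent (F.objD x) (F.mapG g) (F.mapA a) := by
  obtain ⟨hd1, hd2⟩ := hd
  constructor
  · have h := congrArg (F.mapX1 2) hd1
    erw [F.mapX1_comp, F.mapX1_comp, F.mapX1_inv, F.mapX1_D,
      G.push1_eq (edgeMap 0 2 (by decide)), G.push1_eq (edgeMap 1 2 (by decide)),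
      G.push1_eq (edgeMap 0 1 (by decide)), F.mapX1_push, F.mapX1_push, F.mapX1_push] at h
    exact h
  · have h := congrArg (F.mapX2 3) hd2
    erw [F.mapX2_mul, F.mapX2_mul, F.mapX2_inv2, F.mapX2_Ad, F.mapX1_inv,
      F.mapX2_push, F.mapX2_push, F.mapX2_push, F.mapX2_push,
      G.push1_eq (edgeMap 0 1 (by decide)), F.mapX1_push] at h
    exact h

end CosimplicialMor

namespace CosimplicialCrossedGroupoid

variable (H : CosimplicialCrossedGroupoid)

/-- Pushing the modified gauge 2-morphism along an edge. -/
theorem push_modC {q : ℕ} (i j : Fin (q + 1)) (hij : i ≤ j) {y : (H.obj 0).Obj}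
    (h : (H.obj 1).Hom (H.X y 1 0) (H.X y 1 1)) (c : (H.obj 1).G2 (H.X y 1 0))
    (e : (H.obj 0).G2 y) :
    H.push2 (edgeMap i j hij) ((H.obj 1).mul ((H.obj 1).mul
        ((H.obj 1).inv2 ((H.obj 1).Ad ((H.obj 1).inv h) (H.pushV2 1 1 e))) c)
        (H.pushV2 1 0 e))
      = (H.obj q).mul ((H.obj q).mul
          ((H.obj q).inv2 ((H.obj q).Ad ((H.obj q).inv (H.push1'' (edgeMap i j hij) h))
            (H.pushV2 q j e))) (H.push2 (edgeMap i j hij) c))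
          (H.pushV2 q i e) := by
  rw [H.push2_mul, H.push2_mul, H.push2_inv2, H.push2_Ad, H.push1''_inv,
    H.push2_pushV2, H.push2_pushV2]
  rfl

theorem _root_.CrossedGroupoid.gauge_modify1_core (K : CrossedGroupoid) {a0 a1 b0 b1 : K.Obj}
    (F1 : K.Hom a1 b1) (F0 : K.Hom a0 b0) (h : K.Hom a0 a1) (c E0 : K.G2 a0) (E1 : K.G2 a1) :
    K.comp (K.comp (K.comp F1 h) (K.D c)) (K.inv F0) =
      K.comp (K.comp (K.comp (K.comp F1 (K.D E1)) h)
        (K.D (K.mul (K.mul (K.inv2 (K.Ad (K.inv h) E1)) c) E0))) (K.inv (K.comp F0 (K.D E0))) := by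
  simp only [K.D_mul, K.D_inv2, K.D_Ad, K.inv_comp', K.inv_inv, K.comp_assoc, K.inv_comp_cancel,
    K.comp_inv_cancel]

theorem _root_.CrossedGroupoid.conj_cancel_core (K : CrossedGroupoid) {a0 a1 b0 b1 : K.Obj}
    (V1 : K.Hom a1 b1) (V0 : K.Hom a0 b0) (g : K.Hom a0 a1) (d : K.Hom a0 a0) :
    K.comp (K.inv V1) (K.comp (K.comp (K.comp (K.comp V1 g) d) (K.inv V0)) V0) = K.comp g d := by
  simp only [K.comp_assoc, K.inv_comp_cancel, K.inv_comp, K.comp_id]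

/-- Modifying the 0-level morphism of a gauge transformation by `D e`. -/
theorem gauge_modify {y y' : (H.obj 0).Obj}
    {h : (H.obj 1).Hom (H.X y 1 0) (H.X y 1 1)} {b : (H.obj 2).G2 (H.X y 2 0)}
    {g' : (H.obj 1).Hom (H.X y' 1 0) (H.X y' 1 1)} {a' : (H.obj 2).G2 (H.X y' 2 0)}
    (f : (H.obj 0).Hom y y') (c : (H.obj 1).G2 (H.X y 1 0)) (e : (H.obj 0).G2 y)
    (hd1 : (H.obj 2).comp ((H.obj 2).comp
        ((H.obj 2).inv (H.push1 (edgeMap 0 2 (by decide)) h))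
        (H.push1 (edgeMap 1 2 (by decide)) h)) (H.push1 (edgeMap 0 1 (by decide)) h)
      = (H.obj 2).D b)
    (hg : H.IsGauge y h b y' g' a' f c) :
    H.IsGauge y h b y' g' a' ((H.obj 0).comp f ((H.obj 0).D e))
      ((H.obj 1).mul ((H.obj 1).mul
        ((H.obj 1).inv2 ((H.obj 1).Ad ((H.obj 1).inv h) (H.pushV2 1 1 e))) c)
        (H.pushV2 1 0 e)) := by
  obtain ⟨hg1, hg2⟩ := hg
  constructor
  · -- first gauge condition
    rw [hg1]
    rw [show (H.map (vtxMap (1 : Fin 2))).map1 ((H.obj 0).comp f ((H.obj 0).D e))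
        = (H.obj 1).comp (H.pushV 1 1 f) ((H.obj 1).D (H.pushV2 1 1 e)) from by
        rw [show (H.map (vtxMap (1 : Fin 2))).map1 ((H.obj 0).comp f ((H.obj 0).D e))
            = H.pushV 1 1 ((H.obj 0).comp f ((H.obj 0).D e)) from rfl,
          H.pushV_comp, H.pushV_D],
      show (H.map (vtxMap (0 : Fin 2))).map1 ((H.obj 0).comp f ((H.obj 0).D e))
        = (H.obj 1).comp (H.pushV 1 0 f) ((H.obj 1).D (H.pushV2 1 0 e)) from by
        rw [show (H.map (vtxMap (0 : Fin 2))).map1 ((H.obj 0).comp f ((H.obj 0).D e))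
            = H.pushV 1 0 ((H.obj 0).comp f ((H.obj 0).D e)) from rfl,
          H.pushV_comp, H.pushV_D]]
    rw [show (H.map (vtxMap (1 : Fin 2))).map1 f = H.pushV 1 1 f from rfl,
      show (H.map (vtxMap (0 : Fin 2))).map1 f = H.pushV 1 0 f from rfl]
    generalize H.pushV 1 1 f = F1
    generalize H.pushV 1 0 f = F0
    generalize H.pushV2 1 1 e = E1
    generalize H.pushV2 1 0 e = E0
    exact (H.obj 1).gauge_modify1_core F1 F0 h c E0 E1
  · -- second gauge condition
    rw [hg2]
    rw [show (H.map (vtxMap (0 : Fin 3))).map1 ((H.obj 0).comp f ((H.obj 0).D e))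
        = (H.obj 2).comp (H.pushV 2 0 f) ((H.obj 2).D (H.pushV2 2 0 e)) from by
        rw [show (H.map (vtxMap (0 : Fin 3))).map1 ((H.obj 0).comp f ((H.obj 0).D e))
            = H.pushV 2 0 ((H.obj 0).comp f ((H.obj 0).D e)) from rfl,
          H.pushV_comp, H.pushV_D],
      show (H.map (vtxMap (0 : Fin 3))).map1 f = H.pushV 2 0 f from rfl]
    rw [H.push_modC, H.push_modC, H.push_modC]
    exact ((H.obj 2).gauge_modify_core _ _ _ _ _ _ _ _ _ _ _ hd1.symm).symm

end CosimplicialCrossedGroupoid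

open CosimplicialCrossedGroupoid CosimplicialMor CrossedGroupoidHom

/-- Main Theorem: a weak equivalence F : G → H of cosimplicial
crossed groupoids induces a bijection on gauge equivalence classes of descent
data: the induced map is injective and surjective. -/
theorem main_theorem {G H : CosimplicialCrossedGroupoid} (F : CosimplicialMor G H)
    (hF : F.IsWeakEquiv) :
    (∀ P P' : G.Desc,
      (∃ (f : (H.obj 0).Hom (F.objD P.x) (F.objD P'.x))
        (c : (H.obj 1).G2 (H.X (F.objD P.x) 1 0)),
        H.IsGauge (F.objD P.x) (F.mapG P.g) (F.mapA P.a)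
          (F.objD P'.x) (F.mapG P'.g) (F.mapA P'.a) f c) →
      G.GaugeEquiv P P') ∧
    (∀ Q : H.Desc, ∃ (P : G.Desc) (f : (H.obj 0).Hom Q.x (F.objD P.x))
      (c : (H.obj 1).G2 (H.X Q.x 1 0)),
      H.IsGauge Q.x Q.g Q.a (F.objD P.x) (F.mapG P.g) (F.mapA P.a) f c) := by
  constructor
  · -- injectivity
    rintro P P' ⟨f, c, hg⟩
    obtain ⟨f₀, e, hf⟩ := weq_hom_lift (F.app 0) (hF 0) f
    have hmod := H.gauge_modify f c ((H.obj 0).inv2 e) (F.map_isDescent P.isDescent).1 hg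
    have hfe : (H.obj 0).comp f ((H.obj 0).D ((H.obj 0).inv2 e)) = F.mapF f₀ := by
      erw [hf, (H.obj 0).D_inv2, (H.obj 0).comp_assoc, (H.obj 0).comp_inv, (H.obj 0).comp_id]
      rfl
    rw [hfe] at hmod
    obtain ⟨hm1, hm2⟩ := hmod
    set c' : (H.obj 1).G2 (H.X (F.objD P.x) 1 0) :=
      (H.obj 1).mul ((H.obj 1).mul
        ((H.obj 1).inv2 ((H.obj 1).Ad ((H.obj 1).inv (F.mapG P.g))
          (H.pushV2 1 1 ((H.obj 0).inv2 e)))) c)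
        (H.pushV2 1 0 ((H.obj 0).inv2 e)) with hc'
    set B : (G.obj 1).Hom (G.X P.x 1 0) (G.X P.x 1 1) :=
      (G.obj 1).comp ((G.obj 1).inv (G.pushV 1 1 f₀)) ((G.obj 1).comp P'.g (G.pushV 1 0 f₀))
      with hBdef
    have hB : F.mapX1 1 B = (H.obj 1).comp (F.mapX1 1 P.g) ((H.obj 1).D c') := by
      rw [hBdef, F.mapX1_comp, F.mapX1_inv, F.mapX1_comp, F.mapX1_pushV, F.mapX1_pushV]
      rw [show F.mapX1 1 P'.g = F.mapG P'.g from rfl, hm1,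
        show (H.map (vtxMap (1 : Fin 2))).map1 (F.mapF f₀) = H.pushV 1 1 (F.mapF f₀) from rfl,
        show (H.map (vtxMap (0 : Fin 2))).map1 (F.mapF f₀) = H.pushV 1 0 (F.mapF f₀) from rfl]
      exact (H.obj 1).conj_cancel_core _ _ _ _
    have hB' : (F.app 1).map1 B = (H.obj 1).comp ((F.app 1).map1 P.g)
        ((H.obj 1).D ((H.obj 1).cast2 (F.app_X P.x 1 0).symm c')) := by
      have h2 := hB
      unfold CosimplicialMor.mapX1 at h2
      erw [(H.obj 1).hcast_eq_iff] at h2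
      erw [h2, (H.obj 1).hcast_comp (F.app_X P.x 1 0).symm (F.app_X P.x 1 0).symm
        (F.app_X P.x 1 1).symm, (H.obj 1).hcast_hcast, ← (H.obj 1).D_cast2]
      rfl
    obtain ⟨c₀, hc₀, hc₀2⟩ := weq_hom_lift_rel (F.app 1) (hF 1) P.g B _ hB'
    have hmapC : F.mapC c₀ = c' := by
      show (H.obj 1).cast2 (F.app_X P.x 1 0) ((F.app 1).map2 c₀) = c'
      erw [hc₀2, (H.obj 1).cast2_cast2]
      rfl
    have hVB : (G.obj 1).comp (G.pushV 1 1 f₀)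
        ((G.obj 1).comp B ((G.obj 1).inv (G.pushV 1 0 f₀))) = P'.g := by
      rw [hBdef]
      simp only [(G.obj 1).comp_assoc, (G.obj 1).inv_comp_cancel, (G.obj 1).comp_inv_cancel,
        (G.obj 1).comp_inv, (G.obj 1).comp_id]
    have hGi : P'.g = (G.obj 1).comp ((G.obj 1).comp ((G.obj 1).comp (G.pushV 1 1 f₀) P.g)
        ((G.obj 1).D c₀)) ((G.obj 1).inv (G.pushV 1 0 f₀)) := by
      rw [← hVB, hc₀]
      simp only [(G.obj 1).comp_assoc]
    have hgaugeG : G.gaugeG f₀ P.g c₀ = P'.g := hGi.symm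
    have hii : P'.a = G.transportA f₀ P.g P.a c₀ := by
      apply weq_pi2_inj (F.app 2) (hF 2)
      · -- equal D's
        have d1 : (G.obj 2).D P'.a = (G.obj 2).D (G.transportA f₀ P.g P.a c₀) := by
          have t1 := P'.isDescent.1
          have t2 := (G.isDescent_gauge f₀ c₀ P.isDescent).1
          rw [hgaugeG] at t2
          rw [← t1, ← t2]
        exact d1
      · -- equal images
        have m2 := F.map_transportA f₀ P.g P.a c₀
        rw [hmapC] at m2
        have m3 : F.mapA P'.a = F.mapA (G.transportA f₀ P.g P.a c₀) := by
          rw [m2]; exact hm2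
        exact (H.obj 2).cast2_injective (F.app_X P'.x 2 0) m3
    exact ⟨f₀, c₀, hGi, hii⟩
  · -- surjectivity
    intro Q
    obtain ⟨x, ⟨f⟩⟩ := weq_obj_surj (F.app 0) (hF 0) Q.x
    -- conjugated 1-morphism
    have hchat := weq_hom_lift (F.app 1) (hF 1)
      ((H.obj 1).hcast (F.app_X x 1 0).symm (F.app_X x 1 1).symm
        ((H.obj 1).comp ((H.obj 1).comp (H.pushV 1 1 f) Q.g)
          ((H.obj 1).inv (H.pushV 1 0 f))))
    obtain ⟨g, chat, hchat⟩ := hchat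
    have ht : (H.obj 1).comp ((H.obj 1).comp (H.pushV 1 1 f) Q.g)
        ((H.obj 1).inv (H.pushV 1 0 f))
        = (H.obj 1).comp (F.mapG g) ((H.obj 1).D ((H.obj 1).cast2 (F.app_X x 1 0) chat)) := by
      have h2 := congrArg ((H.obj 1).hcast (F.app_X x 1 0) (F.app_X x 1 1)) hchat
      rw [(H.obj 1).hcast_comp (F.app_X x 1 0) (F.app_X x 1 0) (F.app_X x 1 1),
        ← (H.obj 1).D_cast2, (H.obj 1).hcast_hcast] at h2
      exact h2
    set c : (H.obj 1).G2 (H.X Q.x 1 0) :=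
      (H.obj 1).inv2 ((H.obj 1).Ad ((H.obj 1).inv (H.pushV 1 0 f))
        ((H.obj 1).cast2 (F.app_X x 1 0) chat)) with hcdef
    have hg1 : F.mapG g = (H.obj 1).comp ((H.obj 1).comp ((H.obj 1).comp (H.pushV 1 1 f) Q.g)
        ((H.obj 1).D c)) ((H.obj 1).inv (H.pushV 1 0 f)) :=
      (H.obj 1).gauge1_core (H.pushV 1 0 f) (H.pushV 1 1 f) Q.g (F.mapG g) _ ht
    have hdd : H.IsDescent (F.objD x) (F.mapG g) (H.transportA f Q.g Q.a c) := by
      have h0 := H.isDescent_gauge f c Q.isDescent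
      have : H.gaugeG f Q.g c = F.mapG g := hg1.symm
      rwa [this] at h0
    -- lift the 2-morphism
    have hδ := hdd.1
    set u : (G.obj 2).Hom (G.X x 2 0) (G.X x 2 0) :=
      (G.obj 2).comp ((G.obj 2).comp ((G.obj 2).inv (G.push1 (edgeMap 0 2 (by decide)) g))
        (G.push1 (edgeMap 1 2 (by decide)) g)) (G.push1 (edgeMap 0 1 (by decide)) g)
      with hudef
    have hu : F.mapX1 2 u = (H.obj 2).D (H.transportA f Q.g Q.a c) := by
      erw [hudef, F.mapX1_comp, F.mapX1_comp, F.mapX1_inv,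
        G.push1_eq (edgeMap 0 2 (by decide)), G.push1_eq (edgeMap 1 2 (by decide)),
        G.push1_eq (edgeMap 0 1 (by decide)), F.mapX1_push, F.mapX1_push, F.mapX1_push]
      exact hδ
    have hrel : (F.app 2).map1 u = (H.obj 2).comp ((F.app 2).map1 ((G.obj 2).id (G.X x 2 0)))
        ((H.obj 2).D ((H.obj 2).cast2 (F.app_X x 2 0).symm
          (H.transportA f Q.g Q.a c))) := by
      have h2 := hu
      unfold CosimplicialMor.mapX1 at h2
      erw [(H.obj 2).hcast_eq_iff] at h2
      erw [h2, ← (H.obj 2).D_cast2, (F.app 2).map1_id, (H.obj 2).id_comp]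
      rfl
    obtain ⟨a, ha1, ha2⟩ := weq_hom_lift_rel (F.app 2) (hF 2) ((G.obj 2).id _) u _ hrel
    rw [(G.obj 2).id_comp] at ha1
    have hA : F.mapA a = H.transportA f Q.g Q.a c := by
      show (H.obj 2).cast2 (F.app_X x 2 0) ((F.app 2).map2 a) = _
      rw [ha2, (H.obj 2).cast2_cast2]
      rfl
    erw [← hA] at hdd
    have cond1 : (G.obj 2).comp ((G.obj 2).comp
        ((G.obj 2).inv (G.push1 (edgeMap 0 2 (by decide)) g))
        (G.push1 (edgeMap 1 2 (by decide)) g)) (G.push1 (edgeMap 0 1 (by decide)) g)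
        = (G.obj 2).D a := ha1
    have cond2 : (G.obj 3).mul ((G.obj 3).mul
          ((G.obj 3).inv2 (G.push2 (triMap 0 1 3 (by decide) (by decide)) a))
          (G.push2 (triMap 0 2 3 (by decide) (by decide)) a))
        (G.push2 (triMap 0 1 2 (by decide) (by decide)) a)
        = (G.obj 3).Ad ((G.obj 3).inv (G.push1 (edgeMap 0 1 (by decide)) g))
          (G.push2 (triMap 1 2 3 (by decide) (by decide)) a) := by
      apply weq_pi2_inj (F.app 3) (hF 3)
      · exact (G.obj 3).cocycle_D_core
          (G.push1'' (edgeMap 0 1 (by decide)) g) (G.push1'' (edgeMap 0 2 (by decide)) g)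
          (G.push1'' (edgeMap 0 3 (by decide)) g) (G.push1'' (edgeMap 1 2 (by decide)) g)
          (G.push1'' (edgeMap 1 3 (by decide)) g) (G.push1'' (edgeMap 2 3 (by decide)) g)
          _ _ _ _
          (G.push_cond1 0 1 3 (by decide) (by decide) cond1).symm
          (G.push_cond1 0 2 3 (by decide) (by decide) cond1).symm
          (G.push_cond1 0 1 2 (by decide) (by decide) cond1).symm
          (G.push_cond1 1 2 3 (by decide) (by decide) cond1).symm
      · apply (H.obj 3).cast2_injective (F.app_X x 3 0)
        have h := hdd.2
        show F.mapX2 3 _ = F.mapX2 3 _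
        erw [F.mapX2_mul, F.mapX2_mul, F.mapX2_inv2, F.mapX2_Ad, F.mapX1_inv,
          F.mapX2_push, F.mapX2_push, F.mapX2_push, F.mapX2_push,
          G.push1_eq (edgeMap 0 1 (by decide)), F.mapX1_push]
        exact h
    exact ⟨⟨x, g, a, cond1, cond2⟩, f, c, hg1, hA⟩
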